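/- arXiv:2511.01189 — 6 statements merged into one kernel-verified Lean document; each statement's English description precedes it below -/
import Mathlib

section
/- For all indices 1 ≤ i, j ≤ n, the derivations νᵢ and νⱼ commute, and the derivations νᵢ' and νⱼ' commute: [νᵢ, νⱼ] = 0 and [νᵢ', νⱼ'] = 0 as derivations of A. -/
/-!
Danielewski setup: `A = ℂ[u, v, x₁, …, xₙ] = MvPolynomial (Fin 2 ⊕ Fin n) ℂ`,
with `u = X (Sum.inl 0)`, `v = X (Sum.inl 1)`, `xₖ = X (Sum.inr k)`.
-/

open MvPolynomial

noncomputable section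

/-- The coordinate ring `ℂ[u, v, x₁, …, xₙ]`. -/
abbrev DanA (n : ℕ) := MvPolynomial (Fin 2 ⊕ Fin n) ℂ

/-- The variable `u`. -/
def Uvar (n : ℕ) : DanA n := X (Sum.inl 0)

/-- The variable `v`. -/
def Vvar (n : ℕ) : DanA n := X (Sum.inl 1)

/-- `νᵢ = u·∂/∂xᵢ + pᵢ·∂/∂v` : `u ↦ 0`, `v ↦ pᵢ`, `xₖ ↦ δᵢₖ·u`. -/
def nuD {n : ℕ} (p : DanA n) (i : Fin n) : Derivation ℂ (DanA n) (DanA n) :=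
  mkDerivation ℂ (Sum.elim
    (fun j : Fin 2 => if j = 0 then 0 else pderiv (Sum.inr i) p)
    (fun k : Fin n => if k = i then X (Sum.inl 0) else 0))

/-- `νᵢ' = v·∂/∂xᵢ + pᵢ·∂/∂u` : `u ↦ pᵢ`, `v ↦ 0`, `xₖ ↦ δᵢₖ·v`. -/
def nuD' {n : ℕ} (p : DanA n) (i : Fin n) : Derivation ℂ (DanA n) (DanA n) :=
  mkDerivation ℂ (Sum.elim
    (fun j : Fin 2 => if j = 0 then pderiv (Sum.inr i) p else 0)
    (fun k : Fin n => if k = i then X (Sum.inl 1) else 0))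

/-- `H = u·∂/∂u − v·∂/∂v` : `u ↦ u`, `v ↦ −v`, `xₖ ↦ 0`. -/
def HD (n : ℕ) : Derivation ℂ (DanA n) (DanA n) :=
  mkDerivation ℂ (Sum.elim
    (fun j : Fin 2 => if j = 0 then X (Sum.inl 0) else - X (Sum.inl 1))
    (fun _ : Fin n => 0))

/-- `Δᵢⱼ = pᵢ·∂/∂xⱼ − pⱼ·∂/∂xᵢ` : `u, v ↦ 0`, `xₖ ↦ δⱼₖ·pᵢ − δᵢₖ·pⱼ`. -/
def DeltaD {n : ℕ} (p : DanA n) (i j : Fin n) : Derivation ℂ (DanA n) (DanA n) :=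
  mkDerivation ℂ (Sum.elim
    (fun _ : Fin 2 => 0)
    (fun k : Fin n => (if k = j then pderiv (Sum.inr i) p else 0)
      - (if k = i then pderiv (Sum.inr j) p else 0)))


lemma pderiv_comm' {σ R : Type*} [DecidableEq σ] [CommSemiring R] (i j : σ) (f : MvPolynomial σ R) :
    pderiv i (pderiv j f) = pderiv j (pderiv i f) := by
  induction f using MvPolynomial.induction_on' with
  | add f g hf hg => simp [hf, hg]
  | monomial s a =>
    rcases eq_or_ne i j with rfl | hij
    · rfl
    · simp only [pderiv_monomial]
      simp only [Finsupp.tsub_apply, Finsupp.single_apply, if_neg hij, if_neg hij.symm,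
        tsub_zero, tsub_tsub]
      rw [add_comm, mul_right_comm]

lemma nuD_eq {n : ℕ} (p : DanA n) (i : Fin n) :
    nuD p i = Uvar n • (pderiv (Sum.inr i) : Derivation ℂ (DanA n) (DanA n))
      + (pderiv (Sum.inr i) p) • (pderiv (Sum.inl 1) : Derivation ℂ (DanA n) (DanA n)) := by
  apply derivation_ext
  rintro (a | k) <;>
  [fin_cases a <;> simp [nuD, mkDerivation_X, Uvar, pderiv_X, Pi.single_apply];
   simp [nuD, mkDerivation_X, Uvar, pderiv_X, Pi.single_apply]]

lemma nuD'_eq {n : ℕ} (p : DanA n) (i : Fin n) :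
    nuD' p i = Vvar n • (pderiv (Sum.inr i) : Derivation ℂ (DanA n) (DanA n))
      + (pderiv (Sum.inr i) p) • (pderiv (Sum.inl 0) : Derivation ℂ (DanA n) (DanA n)) := by
  apply derivation_ext
  rintro (a | k) <;>
  [fin_cases a <;> simp [nuD', mkDerivation_X, Vvar, pderiv_X, Pi.single_apply];
   simp [nuD', mkDerivation_X, Vvar, pderiv_X, Pi.single_apply]]

lemma pderiv_inl_of_supported {n : ℕ} {p : DanA n}
    (hp : p ∈ supported ℂ (Set.range (Sum.inr : Fin n → Fin 2 ⊕ Fin n))) (a : Fin 2) :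
    pderiv (Sum.inl a) p = 0 := by
  apply pderiv_eq_zero_of_notMem_vars
  intro h
  have := (mem_supported.mp hp) h
  simp at this

lemma nuD_apply {n : ℕ} (p : DanA n) (i : Fin n) (q : DanA n) :
    nuD p i q = Uvar n * pderiv (Sum.inr i) q
      + pderiv (Sum.inr i) p * pderiv (Sum.inl 1) q := by
  rw [nuD_eq]; rfl

lemma nuD'_apply {n : ℕ} (p : DanA n) (i : Fin n) (q : DanA n) :
    nuD' p i q = Vvar n * pderiv (Sum.inr i) q
      + pderiv (Sum.inr i) p * pderiv (Sum.inl 0) q := by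
  rw [nuD'_eq]; rfl

lemma nuD_apply_X {n : ℕ} (p : DanA n) (i : Fin n) (s : Fin 2 ⊕ Fin n) :
    nuD p i (X s) = Sum.elim
      (fun j : Fin 2 => if j = 0 then 0 else pderiv (Sum.inr i) p)
      (fun k : Fin n => if k = i then X (Sum.inl 0) else 0) s :=
  mkDerivation_X _ _ _

lemma nuD'_apply_X {n : ℕ} (p : DanA n) (i : Fin n) (s : Fin 2 ⊕ Fin n) :
    nuD' p i (X s) = Sum.elim
      (fun j : Fin 2 => if j = 0 then pderiv (Sum.inr i) p else 0)
      (fun k : Fin n => if k = i then X (Sum.inl 1) else 0) s :=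
  mkDerivation_X _ _ _

/-- For all `i, j`, the derivations `νᵢ` and `νⱼ` commute, and `νᵢ'` and `νⱼ'` commute. -/
theorem stmt1 (n : ℕ) (hn : 0 < n) (p : DanA n)
    (hp : p ∈ supported ℂ (Set.range (Sum.inr : Fin n → Fin 2 ⊕ Fin n)))
    (i j : Fin n) :
    ⁅nuD p i, nuD p j⁆ = 0 ∧ ⁅nuD' p i, nuD' p j⁆ = 0 := by
  have hiv : ∀ k a, pderiv (Sum.inl a) (pderiv (Sum.inr k) p) = 0 := fun k a => by
    rw [pderiv_comm', pderiv_inl_of_supported hp, map_zero]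
  constructor
  · apply derivation_ext
    rintro (a | k)
    · fin_cases a
      · simp [Derivation.commutator_apply, nuD_apply_X]
      · simp only [Derivation.commutator_apply, nuD_apply, pderiv_X, Pi.single_apply,
          Sum.inr.injEq, Sum.inl.injEq, map_add, pderiv_mul, hiv]
        simp [hiv]
        rw [pderiv_comm' (Sum.inr i) (Sum.inr j)]
        ring
    · simp only [Derivation.commutator_apply, nuD_apply_X, Sum.elim_inr,
        Derivation.zero_apply]
      split_ifs <;> simp [nuD_apply_X]
  · apply derivation_ext
    rintro (a | k)
    · fin_cases a
      · simp only [Derivation.commutator_apply, nuD'_apply, pderiv_X, Pi.single_apply,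
          Sum.inr.injEq, Sum.inl.injEq, map_add, pderiv_mul, hiv]
        simp [hiv]
        rw [pderiv_comm' (Sum.inr i) (Sum.inr j)]
        ring
      · simp [Derivation.commutator_apply, nuD'_apply_X]
    · simp only [Derivation.commutator_apply, nuD'_apply_X, Sum.elim_inr,
        Derivation.zero_apply]
      split_ifs <;> simp [nuD'_apply_X]


end
end

section
/- For each 1 ≤ i ≤ n, the derivations νᵢ and νᵢ' of A are locally nilpotent: for every f ∈ A there exists a natural number m such that the m-fold iterate νᵢ^m applied to f is zero, and likewise there exists m with (νᵢ')^m(f) = 0. -/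
/-!
Danielewski setup: `A = ℂ[u, v, x₁, …, xₙ] = MvPolynomial (Fin 2 ⊕ Fin n) ℂ`,
with `u = X (Sum.inl 0)`, `v = X (Sum.inl 1)`, `xₖ = X (Sum.inr k)`.
-/

open MvPolynomial

noncomputable section

-- helpers
section Helpers
variable {n : ℕ}

lemma iter0 (d : Derivation ℂ (DanA n) (DanA n)) (m : ℕ) : (⇑d)^[m] (0 : DanA n) = 0 :=
  Function.iterate_fixed (map_zero d) m

lemma iterMono {d : Derivation ℂ (DanA n) (DanA n)} {f : DanA n} {a b : ℕ}
    (h : (⇑d)^[a] f = 0) (hab : a ≤ b) : (⇑d)^[b] f = 0 := by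
  obtain ⟨c, rfl⟩ := Nat.exists_eq_add_of_le hab
  rw [Nat.add_comm, Function.iterate_add_apply, h, iter0]

lemma iterAdd (d : Derivation ℂ (DanA n) (DanA n)) (m : ℕ) (f g : DanA n) :
    (⇑d)^[m] (f + g) = (⇑d)^[m] f + (⇑d)^[m] g := by
  induction m with
  | zero => simp
  | succ k ih => simp [Function.iterate_succ_apply', ih, map_add]

lemma iterMul (d : Derivation ℂ (DanA n) (DanA n)) :
    ∀ c a b (f g : DanA n), a + b = c + 1 → (⇑d)^[a] f = 0 → (⇑d)^[b] g = 0 →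
      (⇑d)^[c] (f * g) = 0 := by
  intro c
  induction c using Nat.strong_induction_on with
  | _ c IH =>
    intro a b f g hab hf hg
    rcases a with _ | a'
    · simp only [Function.iterate_zero_apply] at hf
      rw [hf, zero_mul, iter0]
    rcases b with _ | b'
    · simp only [Function.iterate_zero_apply] at hg
      rw [hg, mul_zero, iter0]
    have hc : c = (a' + b') + 1 := by omega
    subst hc
    rw [Function.iterate_succ_apply]
    have hlb : d (f * g) = f * d g + g * d f := by
      rw [Derivation.leibniz]; simp [smul_eq_mul]
    rw [hlb, iterAdd]
    have h1 : (⇑d)^[a' + b'] (f * d g) = 0 := by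
      apply IH (a' + b') (by omega) (a' + 1) b' f (d g) (by omega) hf
      rw [← Function.iterate_succ_apply]; exact hg
    have h2 : (⇑d)^[a' + b'] (g * d f) = 0 := by
      apply IH (a' + b') (by omega) (b' + 1) a' g (d f) (by omega) hg
      rw [← Function.iterate_succ_apply]; exact hf
    rw [h1, h2, add_zero]

lemma pderiv_iter_monomial {σ : Type*} [DecidableEq σ] (j : σ) :
    ∀ k (s : σ →₀ ℕ) (a : ℂ), s j ≤ k →
      (⇑(pderiv j (R := ℂ)))^[k + 1] (monomial s a) = 0 := by
  intro k
  induction k with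
  | zero =>
    intro s a hs
    rw [Function.iterate_one, pderiv_monomial]
    simp [Nat.le_zero.mp hs]
  | succ k ih =>
    intro s a hs
    rw [Function.iterate_succ_apply, pderiv_monomial]
    apply ih
    rw [Finsupp.tsub_apply, Finsupp.single_eq_same]
    omega

lemma pderiv_iter_nil {σ : Type*} [DecidableEq σ] (j : σ) (q : MvPolynomial σ ℂ) :
    ∃ m : ℕ, (⇑(pderiv j (R := ℂ)))^[m] q = 0 := by
  induction q using MvPolynomial.induction_on' with
  | monomial s a => exact ⟨s j + 1, pderiv_iter_monomial j (s j) s a le_rfl⟩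
  | add f g hf hg =>
    obtain ⟨m1, h1⟩ := hf
    obtain ⟨m2, h2⟩ := hg
    refine ⟨max m1 m2, ?_⟩
    have hadd : ∀ m (f g : MvPolynomial σ ℂ),
        (⇑(pderiv j (R := ℂ)))^[m] (f + g)
          = (⇑(pderiv j (R := ℂ)))^[m] f + (⇑(pderiv j (R := ℂ)))^[m] g := by
      intro m f g
      induction m with
      | zero => simp
      | succ k ih => simp [Function.iterate_succ_apply', ih, map_add]
    have hz : ∀ m, (⇑(pderiv j (R := ℂ)))^[m] (0 : MvPolynomial σ ℂ) = 0 := fun m =>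
      Function.iterate_fixed (map_zero _) m
    have hm1 : (⇑(pderiv j (R := ℂ)))^[max m1 m2] f = 0 := by
      obtain ⟨c, hc⟩ := Nat.exists_eq_add_of_le (le_max_left m1 m2)
      rw [hc, Nat.add_comm, Function.iterate_add_apply, h1, hz]
    have hm2 : (⇑(pderiv j (R := ℂ)))^[max m1 m2] g = 0 := by
      obtain ⟨c, hc⟩ := Nat.exists_eq_add_of_le (le_max_right m1 m2)
      rw [hc, Nat.add_comm, Function.iterate_add_apply, h2, hz]
    rw [hadd, hm1, hm2, add_zero]

lemma pderiv_mem_supported {p : DanA n}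
    (hp : p ∈ supported ℂ (Set.range (Sum.inr : Fin n → Fin 2 ⊕ Fin n))) (i : Fin n) :
    pderiv (Sum.inr i) p ∈ supported ℂ (Set.range (Sum.inr : Fin n → Fin 2 ⊕ Fin n)) := by
  rw [supported_eq_range_rename] at hp ⊢
  obtain ⟨q, rfl⟩ := hp
  have hmem : (Sum.inr i : Fin 2 ⊕ Fin n) ∈ Set.range (Sum.inr : Fin n → Fin 2 ⊕ Fin n) :=
    ⟨i, rfl⟩
  have := pderiv_rename (Subtype.val_injective)
    (⟨Sum.inr i, hmem⟩ : Set.range (Sum.inr : Fin n → Fin 2 ⊕ Fin n)) q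
  exact ⟨pderiv _ q, this.symm⟩

lemma genNil (n : ℕ) (i : Fin n) (U : Fin 2 ⊕ Fin n) (d : Derivation ℂ (DanA n) (DanA n))
    (hU : d (X U) = 0)
    (hX : ∀ k : Fin n, d (X (Sum.inr k)) = if k = i then X U else 0)
    (hL : ∀ j : Fin 2, d (X (Sum.inl j)) = 0 ∨
      d (X (Sum.inl j)) ∈ supported ℂ (Set.range (Sum.inr : Fin n → Fin 2 ⊕ Fin n))) :
    ∀ f : DanA n, ∃ m : ℕ, (⇑d)^[m] f = 0 := by
  set S : Set (Fin 2 ⊕ Fin n) := Set.range (Sum.inr : Fin n → Fin 2 ⊕ Fin n) with hS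
  -- Step A : on supported polynomials, d = X U * ∂ᵢ
  have hA : ∀ q ∈ supported ℂ S, d q = X U * pderiv (Sum.inr i) q := by
    intro q hq
    have heq : Set.EqOn ⇑d ⇑((X U : DanA n) • (pderiv (Sum.inr i) : Derivation ℂ (DanA n) (DanA n)))
        (X '' S) := by
      rintro x ⟨j, hj, rfl⟩
      obtain ⟨k, rfl⟩ := hj
      rw [hX k, Derivation.smul_apply, pderiv_X, smul_eq_mul]
      by_cases h : k = i
      · subst h; simp [Pi.single_apply]
      · simp [Pi.single_apply, h, fun hh : Sum.inr i = Sum.inr k => h (Sum.inr_injective hh).symm]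
    have := Derivation.eqOn_adjoin (R := ℂ) heq (show q ∈ Algebra.adjoin ℂ (X '' S) from hq)
    rw [this, Derivation.smul_apply, smul_eq_mul]
  -- Step C
  have hC : ∀ q ∈ supported ℂ S, ∀ m : ℕ,
      (⇑(pderiv (Sum.inr i) (R := ℂ)))^[m] q ∈ supported ℂ S ∧
      (⇑d)^[m] q = (X U) ^ m * (⇑(pderiv (Sum.inr i) (R := ℂ)))^[m] q := by
    intro q hq m
    induction m with
    | zero => simpa using hq
    | succ k ih =>
      obtain ⟨ih1, ih2⟩ := ih
      have hmem : (⇑(pderiv (Sum.inr i) (R := ℂ)))^[k + 1] q ∈ supported ℂ S := by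
        rw [Function.iterate_succ_apply']
        exact pderiv_mem_supported ih1 i
      refine ⟨hmem, ?_⟩
      rw [Function.iterate_succ_apply' (⇑d), ih2, Derivation.leibniz, Derivation.leibniz_pow,
        hU, hA _ ih1, Function.iterate_succ_apply' (⇑(pderiv (Sum.inr i) (R := ℂ)))]
      simp [smul_eq_mul]
      ring
  -- Step D
  have hD : ∀ q ∈ supported ℂ S, ∃ m : ℕ, (⇑d)^[m] q = 0 := by
    intro q hq
    obtain ⟨m, hm⟩ := pderiv_iter_nil (Sum.inr i) q
    exact ⟨m, by rw [(hC q hq m).2, hm, mul_zero]⟩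
  -- variables are nilpotent
  have hvar : ∀ j : Fin 2 ⊕ Fin n, ∃ m : ℕ, (⇑d)^[m] (X j) = 0 := by
    rintro (j | k)
    · rcases hL j with h | h
      · exact ⟨1, h⟩
      · obtain ⟨m, hm⟩ := hD _ h
        exact ⟨m + 1, by rw [Function.iterate_succ_apply]; exact hm⟩
    · by_cases h : k = i
      · refine ⟨2, ?_⟩
        have hdx : d (X (Sum.inr k)) = X U := by rw [hX k, if_pos h]
        rw [Function.iterate_succ_apply, hdx, Function.iterate_one, hU]
      · exact ⟨1, by rw [Function.iterate_one, hX k, if_neg h]⟩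
  -- main induction
  intro f
  induction f using MvPolynomial.induction_on with
  | C a =>
    refine ⟨1, ?_⟩
    rw [Function.iterate_one]
    have : (C a : DanA n) = algebraMap ℂ (DanA n) a := rfl
    rw [this, Derivation.map_algebraMap]
  | add f g hf hg =>
    obtain ⟨m1, h1⟩ := hf
    obtain ⟨m2, h2⟩ := hg
    refine ⟨max m1 m2, ?_⟩
    rw [iterAdd, iterMono h1 (le_max_left _ _), iterMono h2 (le_max_right _ _), add_zero]
  | mul_X f j hf =>
    obtain ⟨a, ha⟩ := hf
    obtain ⟨b, hb⟩ := hvar j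
    exact ⟨a + b, iterMul d (a + b) (a + 1) b f (X j) (by omega)
      (iterMono ha (Nat.le_succ a)) hb⟩

end Helpers


/-- The derivations `νᵢ` and `νᵢ'` are locally nilpotent: every `f ∈ A` is killed by
some iterate. -/
theorem stmt4 (n : ℕ) (hn : 0 < n) (p : DanA n)
    (hp : p ∈ supported ℂ (Set.range (Sum.inr : Fin n → Fin 2 ⊕ Fin n)))
    (i : Fin n) :
    (∀ f : DanA n, ∃ m : ℕ, (⇑(nuD p i))^[m] f = 0) ∧
    (∀ f : DanA n, ∃ m : ℕ, (⇑(nuD' p i))^[m] f = 0) := by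
  constructor
  · apply genNil n i (Sum.inl 0) (nuD p i)
    · simp [nuD, mkDerivation_X]
    · intro k; simp [nuD, mkDerivation_X]
    · intro j
      fin_cases j
      · left; simp [nuD, mkDerivation_X]
      · right
        show nuD p i (X (Sum.inl 1)) ∈ _
        have : nuD p i (X (Sum.inl 1)) = pderiv (Sum.inr i) p := by
          simp [nuD, mkDerivation_X]
        rw [this]
        exact pderiv_mem_supported hp i
  · apply genNil n i (Sum.inl 1) (nuD' p i)
    · simp [nuD', mkDerivation_X]
    · intro k; simp [nuD', mkDerivation_X]
    · intro j
      fin_cases j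
      · right
        show nuD' p i (X (Sum.inl 0)) ∈ _
        have : nuD' p i (X (Sum.inl 0)) = pderiv (Sum.inr i) p := by
          simp [nuD', mkDerivation_X]
        rw [this]
        exact pderiv_mem_supported hp i
      · left; simp [nuD', mkDerivation_X]


end
end

section
/- Let p : (Fin n → ℂ) → ℂ be ℂ-differentiable at a point x with p(x) = 0, and suppose the tuple of partial derivatives a := (∂₁p(x), …, ∂ₙp(x)) is nonzero. Define F : ℂ × ℂ × (Fin n → ℂ) → ℂ by F(u, v, y) = u·v − p(y), and let z = (0, 0, x). Then the kernel of the ℂ-linear map fderiv ℂ F z (which equals {(α, β, w) : Σₖ aₖ·wₖ = 0}) coincides with the ℂ-linear span of the vectors (aᵢ, 0, 0), (0, aᵢ, 0), and (0, 0, aᵢ·eⱼ − aⱼ·eᵢ), over all indices 1 ≤ i, j ≤ n. (That is, the values at the fixed point z of the vector fields νᵢ', νᵢ, Δᵢⱼ span the tangent space of the Danielewski hypersurface {uv = p(y)} at z.) -/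
/-- At a fixed point `z = (0, 0, x)` of the Danielewski hypersurface `{uv = p(y)}`, the
kernel of `fderiv ℂ F z` (for `F(u,v,y) = uv − p(y)`), which is `{(α,β,w) : Σₖ aₖwₖ = 0}`
for `a` the gradient of `p` at `x`, equals the span of the vectors `(aᵢ,0,0)`, `(0,aᵢ,0)`
and `(0,0,aᵢeⱼ − aⱼeᵢ)`. -/
theorem stmt7 (n : ℕ) (p : (Fin n → ℂ) → ℂ) (x : Fin n → ℂ)
    (hp : DifferentiableAt ℂ p x) (hpx : p x = 0)
    (a : Fin n → ℂ) (ha : a = fun i => fderiv ℂ p x (Pi.single i 1 : Fin n → ℂ)) (ha0 : a ≠ 0)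
    (F : ℂ × ℂ × (Fin n → ℂ) → ℂ) (hF : ∀ q, F q = q.1 * q.2.1 - p q.2.2) :
    ((LinearMap.ker ((fderiv ℂ F (0, 0, x)).toLinearMap) : Submodule ℂ (ℂ × ℂ × (Fin n → ℂ))) : Set (ℂ × ℂ × (Fin n → ℂ)))
        = {q : ℂ × ℂ × (Fin n → ℂ) | ∑ k, a k * q.2.2 k = 0} ∧
    LinearMap.ker ((fderiv ℂ F (0, 0, x)).toLinearMap) =
      Submodule.span ℂ
        ((Set.range fun i : Fin n => ((a i, 0, 0) : ℂ × ℂ × (Fin n → ℂ))) ∪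
         (Set.range fun i : Fin n => ((0, a i, 0) : ℂ × ℂ × (Fin n → ℂ))) ∪
         (Set.range fun ij : Fin n × Fin n =>
            ((0, 0, a ij.1 • (Pi.single ij.2 1 : Fin n → ℂ) - a ij.2 • (Pi.single ij.1 1 : Fin n → ℂ)) :
              ℂ × ℂ × (Fin n → ℂ)))) := by
  have hFfun : F = fun q : ℂ × ℂ × (Fin n → ℂ) => q.1 * q.2.1 - p q.2.2 := funext hF
  subst hFfun
  -- derivative computation
  have h2 : HasFDerivAt (fun q : ℂ × ℂ × (Fin n → ℂ) => p q.2.2)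
      ((fderiv ℂ p x).comp ((ContinuousLinearMap.snd ℂ ℂ (Fin n → ℂ)).comp
        (ContinuousLinearMap.snd ℂ ℂ (ℂ × (Fin n → ℂ))))) (0, 0, x) :=
    hp.hasFDerivAt.comp _ ((hasFDerivAt_snd).comp _ hasFDerivAt_snd)
  have h1 : HasFDerivAt (fun q : ℂ × ℂ × (Fin n → ℂ) => q.1 * q.2.1)
      (0 : ℂ × ℂ × (Fin n → ℂ) →L[ℂ] ℂ) (0, 0, x) := by
    have ha1 : HasFDerivAt (fun q : ℂ × ℂ × (Fin n → ℂ) => q.1)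
        (ContinuousLinearMap.fst ℂ ℂ (ℂ × (Fin n → ℂ))) (0, 0, x) := hasFDerivAt_fst
    have ha2 : HasFDerivAt (fun q : ℂ × ℂ × (Fin n → ℂ) => q.2.1)
        ((ContinuousLinearMap.fst ℂ ℂ (Fin n → ℂ)).comp
          (ContinuousLinearMap.snd ℂ ℂ (ℂ × (Fin n → ℂ)))) (0, 0, x) :=
      (hasFDerivAt_fst).comp _ hasFDerivAt_snd
    have := ha1.mul ha2
    refine this.congr_fderiv ?_
    ext <;> simp
  have hD : HasFDerivAt (fun q : ℂ × ℂ × (Fin n → ℂ) => q.1 * q.2.1 - p q.2.2)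
      (0 - (fderiv ℂ p x).comp ((ContinuousLinearMap.snd ℂ ℂ (Fin n → ℂ)).comp
        (ContinuousLinearMap.snd ℂ ℂ (ℂ × (Fin n → ℂ))))) (0, 0, x) := h1.sub h2
  have hDf := hD.fderiv
  have happ : ∀ q : ℂ × ℂ × (Fin n → ℂ),
      fderiv ℂ (fun q : ℂ × ℂ × (Fin n → ℂ) => q.1 * q.2.1 - p q.2.2) (0, 0, x) q
        = -(fderiv ℂ p x q.2.2) := by
    intro q; rw [hDf]; simp
  have hkey : ∀ w : Fin n → ℂ, fderiv ℂ p x w = ∑ k, a k * w k := by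
    intro w
    have hw : w = ∑ k, w k • (Pi.single k 1 : Fin n → ℂ) := by
      funext j
      simp [Finset.sum_apply, Pi.single_apply]
    conv_lhs => rw [hw]
    rw [map_sum]
    simp [ha, mul_comm]
  have hmem : ∀ q : ℂ × ℂ × (Fin n → ℂ),
      q ∈ LinearMap.ker ((fderiv ℂ (fun q : ℂ × ℂ × (Fin n → ℂ) => q.1 * q.2.1 - p q.2.2) (0, 0, x)).toLinearMap)
        ↔ ∑ k, a k * q.2.2 k = 0 := by
    intro q
    rw [LinearMap.mem_ker]
    rw [ContinuousLinearMap.coe_coe, happ q, hkey, neg_eq_zero]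
  constructor
  · ext q; simpa using hmem q
  · apply le_antisymm
    · intro q hq
      rw [hmem] at hq
      obtain ⟨i₀, hi₀⟩ : ∃ i, a i ≠ 0 := Function.ne_iff.mp ha0
      have h3 : ((0 : ℂ), (0 : ℂ), q.2.2) =
          ∑ j, (q.2.2 j / a i₀) •
            ((0, 0, a i₀ • (Pi.single j 1 : Fin n → ℂ) - a j • (Pi.single i₀ 1 : Fin n → ℂ)) :
              ℂ × ℂ × (Fin n → ℂ)) := by
        rw [Prod.ext_iff]; constructor
        · simp [Prod.fst_sum]
        rw [Prod.ext_iff]; constructor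
        · simp [Prod.snd_sum, Prod.fst_sum]
        funext m
        simp only [Prod.snd_sum, Prod.smul_mk, Finset.sum_apply,
          Pi.smul_apply, Pi.sub_apply, Pi.single_apply, smul_eq_mul, smul_sub, mul_sub]
        rw [Finset.sum_sub_distrib]
        have A : ∑ k, q.2.2 k / a i₀ * (a i₀ * if m = k then 1 else 0) = q.2.2 m := by
          rw [Finset.sum_eq_single m]
          · rw [if_pos rfl]; field_simp
          · intro b _ hb; rw [if_neg (Ne.symm hb)]; ring
          · simp
        have B : ∑ k, q.2.2 k / a i₀ * (a k * if m = i₀ then 1 else 0) = 0 := by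
          by_cases hm : m = i₀
          · have : ∑ k, q.2.2 k / a i₀ * (a k * if m = i₀ then 1 else 0)
                = (∑ k, a k * q.2.2 k) / a i₀ := by
              rw [Finset.sum_div]
              refine Finset.sum_congr rfl fun k _ => ?_
              rw [if_pos hm]; ring
            rw [this, hq, zero_div]
          · simp [hm]
        rw [A, B, sub_zero]
      set S := ((Set.range fun i : Fin n => ((a i, 0, 0) : ℂ × ℂ × (Fin n → ℂ))) ∪
         (Set.range fun i : Fin n => ((0, a i, 0) : ℂ × ℂ × (Fin n → ℂ))) ∪
         (Set.range fun ij : Fin n × Fin n =>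
            ((0, 0, a ij.1 • (Pi.single ij.2 1 : Fin n → ℂ) - a ij.2 • (Pi.single ij.1 1 : Fin n → ℂ)) :
              ℂ × ℂ × (Fin n → ℂ)))) with hS
      have m3 : ((0 : ℂ), (0 : ℂ), q.2.2) ∈ Submodule.span ℂ S := by
        rw [h3]
        exact Submodule.sum_mem _ fun j _ => Submodule.smul_mem _ _
          (Submodule.subset_span (Or.inr ⟨(i₀, j), rfl⟩))
      have m1 : ((q.1 : ℂ), (0 : ℂ), (0 : Fin n → ℂ)) ∈ Submodule.span ℂ S := by
        have : ((q.1 : ℂ), (0 : ℂ), (0 : Fin n → ℂ)) = (q.1 / a i₀) • ((a i₀, 0, 0) : ℂ × ℂ × (Fin n → ℂ)) := by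
          simp [Prod.ext_iff]; field_simp
        rw [this]
        exact Submodule.smul_mem _ _ (Submodule.subset_span (Or.inl (Or.inl ⟨i₀, rfl⟩)))
      have m2 : ((0 : ℂ), (q.2.1 : ℂ), (0 : Fin n → ℂ)) ∈ Submodule.span ℂ S := by
        have : ((0 : ℂ), (q.2.1 : ℂ), (0 : Fin n → ℂ)) = (q.2.1 / a i₀) • ((0, a i₀, 0) : ℂ × ℂ × (Fin n → ℂ)) := by
          simp [Prod.ext_iff]; field_simp
        rw [this]
        exact Submodule.smul_mem _ _ (Submodule.subset_span (Or.inl (Or.inr ⟨i₀, rfl⟩)))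
      have hqeq : q = (q.1, 0, 0) + (0, q.2.1, 0) + ((0 : ℂ), (0 : ℂ), q.2.2) := by
        simp [Prod.ext_iff]
      rw [hqeq]
      exact Submodule.add_mem _ (Submodule.add_mem _ m1 m2) m3
    · rw [Submodule.span_le]
      rintro q hq'
      rw [SetLike.mem_coe, hmem]
      rcases hq' with ((⟨i, rfl⟩ | ⟨i, rfl⟩) | ⟨ij, rfl⟩)
      · simp
      · simp
      · simp only [Pi.sub_apply, Pi.smul_apply, Pi.single_apply, smul_eq_mul, mul_sub,
          Finset.sum_sub_distrib, mul_ite, mul_one, mul_zero, Finset.sum_ite_eq,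
          Finset.sum_ite_eq', Finset.mem_univ, if_true]
        ring
end

section
/- Let p : (Fin n → ℂ) → ℂ be ℂ-differentiable at a point x, and let z = (u, v, x) ∈ ℂ × ℂ × (Fin n → ℂ) with u ≠ 0. Define F(u, v, y) = u·v − p(y). Then the n + 1 vectors H(z) := (u, −v, 0) and νᵢ(z) := (0, ∂ᵢp(x), u·eᵢ) for 1 ≤ i ≤ n are ℂ-linearly independent and span the kernel of the ℂ-linear map fderiv ℂ F z (that linear map being (α, β, w) ↦ v·α + u·β − Σₖ ∂ₖp(x)·wₖ). In particular, at points of the Danielewski hypersurface where u ≠ 0 the vector fields νᵢ and H span the tangent space. -/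
/-- At a point `z = (u, v, x)` with `u ≠ 0`, the `n + 1` vectors `H(z) = (u, −v, 0)` and
`νᵢ(z) = (0, ∂ᵢp(x), u·eᵢ)` are linearly independent and span the kernel of
`fderiv ℂ F z`, where `F(u,v,y) = uv − p(y)`; that differential is
`(α, β, w) ↦ v·α + u·β − Σₖ ∂ₖp(x)·wₖ`. -/
theorem stmt8 (n : ℕ) (p : (Fin n → ℂ) → ℂ) (x : Fin n → ℂ)
    (hp : DifferentiableAt ℂ p x) (u v : ℂ) (hu : u ≠ 0)
    (F : ℂ × ℂ × (Fin n → ℂ) → ℂ) (hF : ∀ q, F q = q.1 * q.2.1 - p q.2.2)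
    (g : Option (Fin n) → ℂ × ℂ × (Fin n → ℂ))
    (hgH : g none = (u, -v, 0))
    (hgnu : ∀ i : Fin n,
      g (some i) = (0, fderiv ℂ p x (Pi.single i 1 : Fin n → ℂ), u • (Pi.single i 1 : Fin n → ℂ))) :
    (∀ q : ℂ × ℂ × (Fin n → ℂ),
      fderiv ℂ F (u, v, x) q =
        v * q.1 + u * q.2.1 - ∑ k, fderiv ℂ p x (Pi.single k 1 : Fin n → ℂ) * q.2.2 k) ∧
    LinearIndependent ℂ g ∧
    Submodule.span ℂ (Set.range g) = LinearMap.ker (fderiv ℂ F (u, v, x) : ℂ × ℂ × (Fin n → ℂ) →ₗ[ℂ] ℂ) := by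
  set D := fderiv ℂ p x with hDdef
  set z : ℂ × ℂ × (Fin n → ℂ) := (u, v, x) with hz
  have hsum : ∀ w : Fin n → ℂ, D w = ∑ k, D (Pi.single k 1) * w k := by
    intro w
    have hw : w = ∑ k, w k • (Pi.single k 1 : Fin n → ℂ) := by
      ext j
      simp [Pi.single_apply, Finset.sum_ite_eq']
    conv_lhs => rw [hw]
    rw [map_sum]
    simp [mul_comm]
  have h1 : HasFDerivAt (fun q : ℂ × ℂ × (Fin n → ℂ) => q.1)
      (ContinuousLinearMap.fst ℂ ℂ (ℂ × (Fin n → ℂ))) z := hasFDerivAt_fst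
  have h2 : HasFDerivAt (fun q : ℂ × ℂ × (Fin n → ℂ) => q.2.1)
      ((ContinuousLinearMap.fst ℂ ℂ (Fin n → ℂ)).comp (ContinuousLinearMap.snd ℂ ℂ (ℂ × (Fin n → ℂ)))) z :=
    hasFDerivAt_fst.comp z hasFDerivAt_snd
  have h3 : HasFDerivAt (fun q : ℂ × ℂ × (Fin n → ℂ) => p q.2.2)
      (D.comp ((ContinuousLinearMap.snd ℂ ℂ (Fin n → ℂ)).comp (ContinuousLinearMap.snd ℂ ℂ (ℂ × (Fin n → ℂ))))) z :=
    hp.hasFDerivAt.comp z (hasFDerivAt_snd.comp z hasFDerivAt_snd)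
  have hFD : HasFDerivAt (fun q : ℂ × ℂ × (Fin n → ℂ) => q.1 * q.2.1 - p q.2.2) _ z := (h1.mul h2).sub h3
  have hFeq : F = fun q : ℂ × ℂ × (Fin n → ℂ) => q.1 * q.2.1 - p q.2.2 := funext hF
  rw [← hFeq] at hFD
  have hfd := hFD.fderiv
  have happ : ∀ q : ℂ × ℂ × (Fin n → ℂ),
      fderiv ℂ F z q = v * q.1 + u * q.2.1 - D q.2.2 := by
    intro q
    rw [hfd]
    simp only [ContinuousLinearMap.coe_sub', ContinuousLinearMap.coe_add',
      ContinuousLinearMap.coe_smul', Pi.sub_apply, Pi.add_apply, Pi.smul_apply,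
      ContinuousLinearMap.coe_comp', Function.comp_apply, ContinuousLinearMap.coe_fst',
      ContinuousLinearMap.coe_snd', smul_eq_mul]
    simp only [hz]
    ring_nf
  have happ' : ∀ q : ℂ × ℂ × (Fin n → ℂ),
      fderiv ℂ F z q = v * q.1 + u * q.2.1 - ∑ k, D (Pi.single k 1) * q.2.2 k := by
    intro q; rw [happ q, ← hsum]
  have hmemker : ∀ q : ℂ × ℂ × (Fin n → ℂ),
      q ∈ LinearMap.ker (fderiv ℂ F z : ℂ × ℂ × (Fin n → ℂ) →ₗ[ℂ] ℂ) ↔ v * q.1 + u * q.2.1 - D q.2.2 = 0 := by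
    intro q
    rw [LinearMap.mem_ker, ContinuousLinearMap.coe_coe, happ q]
  refine ⟨happ', ?_, ?_⟩
  · rw [Fintype.linearIndependent_iff]
    intro c hc
    rw [Fintype.sum_option] at hc
    have h3rd := congrArg (fun q : ℂ × ℂ × (Fin n → ℂ) => q.2.2) hc
    simp only [Prod.snd_sum, Prod.smul_snd, hgH, hgnu, smul_zero, Prod.snd_add,
      Prod.smul_snd] at h3rd
    have hsome : ∀ i : Fin n, c (some i) = 0 := by
      intro i
      have := congrFun h3rd i
      simp [Pi.single_apply, Finset.sum_ite_eq', smul_eq_mul] at this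
      rcases this with h | h
      · exact h
      · exact absurd h hu
    have h1st := congrArg (fun q : ℂ × ℂ × (Fin n → ℂ) => q.1) hc
    simp only [Prod.fst_sum, Prod.smul_fst, hgH, hgnu, smul_zero, Prod.fst_add,
      smul_eq_mul, mul_zero, Finset.sum_const_zero, add_zero] at h1st
    have hnone : c none = 0 := by
      rcases mul_eq_zero.mp h1st with h | h
      · exact h
      · exact absurd h hu
    intro o; cases o with
    | none => exact hnone
    | some i => exact hsome i
  · apply le_antisymm
    · rw [Submodule.span_le]
      rintro _ ⟨o, rfl⟩
      rw [SetLike.mem_coe, hmemker]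
      cases o with
      | none => rw [hgH]; simp [mul_comm]
      | some i =>
        rw [hgnu i]
        simp only [map_smul, smul_eq_mul]
        ring
    · intro q hq
      rw [hmemker] at hq
      rw [Submodule.mem_span_range_iff_exists_fun]
      refine ⟨fun o => Option.elim o (q.1 / u) (fun i => q.2.2 i / u), ?_⟩
      rw [Fintype.sum_option]
      simp only [Option.elim, hgH, hgnu]
      have hD2 : D q.2.2 = v * q.1 + u * q.2.1 := by linear_combination -hq
      have hDs : ∑ i, (q.2.2 i / u) * D (Pi.single i 1) = D q.2.2 / u := by
        rw [hsum q.2.2, Finset.sum_div]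
        exact Finset.sum_congr rfl fun i _ => by ring
      refine Prod.ext ?_ (Prod.ext ?_ ?_)
      · simp only [Prod.fst_add, Prod.smul_fst, Prod.fst_sum, smul_eq_mul, mul_zero,
          Finset.sum_const_zero, add_zero]
        field_simp
      · simp only [Prod.snd_add, Prod.fst_add, Prod.smul_snd, Prod.smul_fst,
          Prod.snd_sum, Prod.fst_sum, smul_eq_mul]
        rw [hDs, hD2]
        field_simp
        ring
      · simp only [Prod.snd_add, Prod.smul_snd, Prod.snd_sum, smul_zero, zero_add]
        ext j
        simp only [Finset.sum_apply, Pi.smul_apply, Pi.single_apply, smul_eq_mul,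
          mul_ite, mul_one, mul_zero, Finset.sum_ite_eq', Finset.mem_univ, if_true]
        field_simp
        simp [Finset.sum_ite_eq]
end

section
/- Let S, Z, Y be topological spaces, let W ⊆ Z be open, and let χ : Z → ℝ be continuous with 0 ≤ χ ≤ 1 and with closed support tsupport χ contained in W. Let b : S × Z → Y be continuous, and let c : S × [0,1] × W → Y be continuous (W carrying the subspace topology) with c(s, 1, x) = b(s, x) for all s ∈ S and x ∈ W. Define b̃ : S × [0,1] × Z → Y by b̃(s, t, x) = c(s, 1 + (t − 1)·χ(x), x) when x ∈ W, and b̃(s, t, x) = b(s, x) when x ∉ W. Then: (1) b̃ is continuous; (2) b̃(s, 1, x) = b(s, x) for all s, x; (3) b̃(s, t, x) = b(s, x) whenever χ(x) = 0; (4) b̃(s, t, x) = c(s, t, x) whenever x ∈ W and χ(x) = 1. Moreover, if a group K acts continuously on Z and on Y, W is K-invariant, χ is K-invariant (χ(k • x) = χ(x)), and b and c are K-equivariant in the Z-variable (b(s, k • x) = k • b(s, x) and c(s, t, k • x) = k • c(s, t, x)), then b̃ is K-equivariant in the Z-variable. -/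
open Pointwise unitInterval Topology

/-- The gluing construction: given open `W ⊆ Z`, a cutoff `χ` with values in `[0,1]` and
`tsupport χ ⊆ W`, a continuous `b : S × Z → Y`, and a continuous
`c : S × [0,1] × W → Y` with `c(s,1,x) = b(s,x)`, the map `b̃` defined by
`b̃(s,t,x) = c(s, 1 + (t−1)χ(x), x)` on `W` and `b̃(s,t,x) = b(s,x)` off `W` is
continuous, equals `b` at `t = 1` and where `χ = 0`, equals `c` where `χ = 1`, and is
equivariant whenever the data are. -/
theorem stmt12 (S Z Y : Type*) [TopologicalSpace S] [TopologicalSpace Z] [TopologicalSpace Y]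
    (W : Set Z) (hW : IsOpen W)
    (χ : Z → ℝ) (hχc : Continuous χ) (hχ0 : ∀ x, 0 ≤ χ x) (hχ1 : ∀ x, χ x ≤ 1)
    (hsupp : tsupport χ ⊆ W)
    (b : S × Z → Y) (hb : Continuous b)
    (c : S × I × W → Y) (hc : Continuous c)
    (hc1 : ∀ (s : S) (x : W), c (s, 1, x) = b (s, (x : Z)))
    (btilde : S × I × Z → Y)
    (hbtW : ∀ (s : S) (t : I) (x : Z) (hx : x ∈ W),
      btilde (s, t, x) =
        c (s, ⟨1 + ((t : ℝ) - 1) * χ x,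
              ⟨by nlinarith [t.2.1, t.2.2, hχ0 x, hχ1 x],
               by nlinarith [t.2.1, t.2.2, hχ0 x, hχ1 x]⟩⟩,
           ⟨x, hx⟩))
    (hbtn : ∀ (s : S) (t : I) (x : Z), x ∉ W → btilde (s, t, x) = b (s, x)) :
    Continuous btilde ∧
    (∀ (s : S) (x : Z), btilde (s, 1, x) = b (s, x)) ∧
    (∀ (s : S) (t : I) (x : Z), χ x = 0 → btilde (s, t, x) = b (s, x)) ∧
    (∀ (s : S) (t : I) (x : Z) (hx : x ∈ W), χ x = 1 → btilde (s, t, x) = c (s, t, ⟨x, hx⟩)) ∧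
    (∀ (K : Type) [Group K] [TopologicalSpace K] [IsTopologicalGroup K]
        [MulAction K Z] [MulAction K Y],
      ∀ [ContinuousSMul K Z] [ContinuousSMul K Y],
      (∀ k : K, k • W = W) →
      (∀ (k : K) (x : Z), χ (k • x) = χ x) →
      (∀ (s : S) (k : K) (x : Z), b (s, k • x) = k • b (s, x)) →
      (∀ (s : S) (t : I) (k : K) (x : Z) (hx : x ∈ W) (hkx : k • x ∈ W),
        c (s, t, ⟨k • x, hkx⟩) = k • c (s, t, ⟨x, hx⟩)) →
      ∀ (s : S) (t : I) (k : K) (x : Z), btilde (s, t, k • x) = k • btilde (s, t, x)) := by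

  have key2 : ∀ (s : S) (t : I) (x : Z), χ x = 0 → btilde (s, t, x) = b (s, x) := by
    intro s t x h0
    by_cases hx : x ∈ W
    · have : btilde (s, t, x) = c (s, 1, ⟨x, hx⟩) := by
        rw [hbtW s t x hx]
        congr 1
        simp [Prod.ext_iff, Subtype.ext_iff, h0]
      rw [this, hc1]
    · exact hbtn s t x hx
  refine ⟨?_, ?_, key2, ?_, ?_⟩
  · -- continuity
    rw [continuous_iff_continuousAt]
    rintro ⟨s, t, x⟩
    by_cases hx : x ∈ W
    · -- use the open embedding S × I × W → S × I × Z
      have hemb : IsOpenEmbedding (fun p : S × I × W => (p.1, p.2.1, (p.2.2 : Z))) :=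
        IsOpenEmbedding.id.prodMap
          (IsOpenEmbedding.id.prodMap hW.isOpenEmbedding_subtypeVal)
      have : ContinuousAt btilde
          ((fun p : S × I × W => (p.1, p.2.1, (p.2.2 : Z))) (s, t, ⟨x, hx⟩)) := by
        rw [← hemb.continuousAt_iff]
        have hcomp : (btilde ∘ fun p : S × I × W => (p.1, p.2.1, (p.2.2 : Z))) =
            fun p : S × I × W =>
              c (p.1, ⟨1 + ((p.2.1 : ℝ) - 1) * χ (p.2.2 : Z),
                ⟨by nlinarith [p.2.1.2.1, p.2.1.2.2, hχ0 (p.2.2 : Z), hχ1 (p.2.2 : Z)],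
                 by nlinarith [p.2.1.2.1, p.2.1.2.2, hχ0 (p.2.2 : Z), hχ1 (p.2.2 : Z)]⟩⟩,
                p.2.2) := by
          funext p
          obtain ⟨s', t', x'⟩ := p
          simpa using hbtW s' t' (x' : Z) x'.2
        rw [hcomp]
        apply Continuous.continuousAt
        apply hc.comp
        refine continuous_fst.prodMk (Continuous.prodMk ?_ (continuous_snd.comp continuous_snd))
        apply Continuous.subtype_mk
        exact (continuous_const.add
          (((continuous_subtype_val.comp (continuous_fst.comp continuous_snd)).sub
            continuous_const).mul (hχc.comp (continuous_subtype_val.comp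
            (continuous_snd.comp continuous_snd)))))
      exact this
    · -- x ∉ W ⊆ supp: agrees with b near x
      have hx' : x ∈ (tsupport χ)ᶜ := fun h => hx (hsupp h)
      have hU : IsOpen ((Set.univ : Set S) ×ˢ (Set.univ : Set I) ×ˢ (tsupport χ)ᶜ) :=
        isOpen_univ.prod (isOpen_univ.prod (isClosed_tsupport χ).isOpen_compl)
      have hmem : (s, t, x) ∈ (Set.univ : Set S) ×ˢ (Set.univ : Set I) ×ˢ (tsupport χ)ᶜ := by
        simp [hx']
      have heq : btilde =ᶠ[nhds (s, t, x)] fun p => b (p.1, p.2.2) := by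
        filter_upwards [hU.mem_nhds hmem] with p hp
        obtain ⟨s', t', x'⟩ := p
        have : χ x' = 0 := image_eq_zero_of_notMem_tsupport hp.2.2
        exact key2 s' t' x' this
      exact (ContinuousAt.congr (Continuous.continuousAt
        (hb.comp (continuous_fst.prodMk (continuous_snd.comp continuous_snd)))) heq.symm)
  · intro s x
    by_cases hx : x ∈ W
    · have : btilde (s, 1, x) = c (s, 1, ⟨x, hx⟩) := by
        rw [hbtW s 1 x hx]
        congr 1
        simp [Prod.ext_iff, Subtype.ext_iff]
      rw [this, hc1]
    · exact hbtn s 1 x hx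
  · intro s t x hx h1
    rw [hbtW s t x hx]
    congr 1
    simp [Prod.ext_iff, Subtype.ext_iff, h1]
  · intro K _ _ _ _ _ _ _ hWinv hχinv hbinv hcinv s t k x
    by_cases hx : x ∈ W
    · have hkx : k • x ∈ W := by
        rw [← hWinv k]; exact Set.smul_mem_smul_set hx
      rw [hbtW s t x hx, hbtW s t (k • x) hkx, ← hcinv s _ k x hx hkx]
      congr 1
      simp [Prod.ext_iff, Subtype.ext_iff, hχinv]
    · have hkx : k • x ∉ W := by
        intro h
        apply hx
        have := Set.smul_mem_smul_set (a := k⁻¹) h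
        rwa [inv_smul_smul, hWinv] at this
      rw [hbtn s t x hx, hbtn s t (k • x) hkx, hbinv]
end

section
/- Let A and B be topological spaces and let α : A → B be a continuous map which is a homotopy equivalence. Let n ≥ 0, let 𝔹ₙ denote the closed unit ball in ℝⁿ and ∂𝔹ₙ its boundary sphere. Let f : 𝔹ₙ → B be continuous and φ : ∂𝔹ₙ → A be continuous with α(φ(x)) = f(x) for all x ∈ ∂𝔹ₙ. Then there exist a continuous map F : 𝔹ₙ → A with F(x) = φ(x) for all x ∈ ∂𝔹ₙ, and a homotopy H : 𝔹ₙ × [0,1] → B with H(x, 0) = f(x), H(x, 1) = α(F(x)) for all x ∈ 𝔹ₙ, and H(x, t) = f(x) for all x ∈ ∂𝔹ₙ and t ∈ [0,1]. In other words, f can be deformed, keeping its boundary values fixed, to a map that lifts through α extending φ. -/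
open unitInterval

noncomputable section StmtAux14

namespace StmtAux14

variable {X Y Z : Type*} [TopologicalSpace X] [TopologicalSpace Y] [TopologicalSpace Z]

/-- continuity of a family of paths -/
def famC (p : X → ℝ → Y) : Prop := Continuous fun z : X × ℝ => p z.1 z.2

/-- continuity of a family of squares -/
def sqC (h : X → ℝ → ℝ → Y) : Prop := Continuous fun z : X × ℝ × ℝ => h z.1 z.2.1 z.2.2

/-- homotopy rel endpoints between two families of paths -/
def RelH (p q : X → ℝ → Y) : Prop :=
  ∃ h : X → ℝ → ℝ → Y,
    sqC h ∧
    (∀ x u, h x u 0 = p x u) ∧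
    (∀ x u, h x u 1 = q x u) ∧
    (∀ x s, h x 0 s = p x 0) ∧
    (∀ x s, h x 1 s = p x 1)

theorem sqC.fix2 {h : X → ℝ → ℝ → Y} (hc : sqC h) (c : ℝ) :
    Continuous fun z : X × ℝ => h z.1 z.2 c := by
  have : Continuous fun z : X × ℝ => (z.1, z.2, c) := by fun_prop
  exact hc.comp this

theorem sqC.comp3 {h : X → ℝ → ℝ → Y} (hc : sqC h) {W : Type*} [TopologicalSpace W]
    {a : W → X} {b c : W → ℝ} (ha : Continuous a) (hb : Continuous b) (hcc : Continuous c) :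
    Continuous fun w : W => h (a w) (b w) (c w) := by
  have : Continuous fun w : W => ((a w, b w, c w) : X × ℝ × ℝ) := by fun_prop
  exact hc.comp this

theorem famC.comp2 {p : X → ℝ → Y} (hp : famC p) {W : Type*} [TopologicalSpace W]
    {a : W → X} {b : W → ℝ} (ha : Continuous a) (hb : Continuous b) :
    Continuous fun w : W => p (a w) (b w) := by
  have : Continuous fun w : W => ((a w, b w) : X × ℝ) := by fun_prop
  exact hp.comp this

theorem RelH.famC_left {p q : X → ℝ → Y} (h : RelH p q) : famC p := by
  obtain ⟨h, hc, h0, _, _, _⟩ := h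
  have := hc.fix2 0
  simpa only [famC, h0] using this

theorem RelH.famC_right {p q : X → ℝ → Y} (h : RelH p q) : famC q := by
  obtain ⟨h, hc, _, h1, _, _⟩ := h
  have := hc.fix2 1
  simpa only [famC, h1] using this

theorem RelH.end0 {p q : X → ℝ → Y} (h : RelH p q) : ∀ x, q x 0 = p x 0 := by
  obtain ⟨h, _, h0, h1, hl, _⟩ := h
  intro x; rw [← h1 x 0, hl x 1]

theorem RelH.end1 {p q : X → ℝ → Y} (h : RelH p q) : ∀ x, q x 1 = p x 1 := by
  obtain ⟨h, _, h0, h1, _, hr⟩ := h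
  intro x; rw [← h1 x 1, hr x 1]

theorem RelH.refl {p : X → ℝ → Y} (hp : famC p) : RelH p p :=
  ⟨fun x u _ => p x u, hp.comp2 (by fun_prop) (by fun_prop), fun _ _ => rfl, fun _ _ => rfl,
    fun _ _ => rfl, fun _ _ => rfl⟩

theorem RelH.symm {p q : X → ℝ → Y} (h : RelH p q) : RelH q p := by
  have e0 := h.end0; have e1 := h.end1
  obtain ⟨h, hc, h0, h1, hl, hr⟩ := h
  refine ⟨fun x u s => h x u (1 - s), hc.comp3 (by fun_prop) (by fun_prop) (by fun_prop),
    ?_, ?_, ?_, ?_⟩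
  · intro x u; show h x u (1-0) = q x u; norm_num [h1]
  · intro x u; show h x u (1-1) = p x u; norm_num [h0]
  · intro x s; show h x 0 (1-s) = q x 0; rw [hl, ← e0]
  · intro x s; show h x 1 (1-s) = q x 1; rw [hr, ← e1]

theorem RelH.cast {p q p' q' : X → ℝ → Y} (h : RelH p q)
    (hp : ∀ x u, p x u = p' x u) (hq : ∀ x u, q x u = q' x u) : RelH p' q' := by
  obtain ⟨h, hc, h0, h1, hl, hr⟩ := h
  exact ⟨h, hc, fun x u => (h0 x u).trans (hp x u), fun x u => (h1 x u).trans (hq x u),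
    fun x s => (hl x s).trans (hp x 0), fun x s => (hr x s).trans (hp x 1)⟩

theorem RelH.trans {p q r : X → ℝ → Y} (h₁ : RelH p q) (h₂ : RelH q r) : RelH p r := by
  have e0 := h₁.end0; have e1 := h₁.end1
  obtain ⟨h, hc, h0, h1, hl, hr⟩ := h₁
  obtain ⟨g, gc, g0, g1, gl, gr⟩ := h₂
  refine ⟨fun x u s => if s ≤ 1/2 then h x u (2*s) else g x u (2*s - 1), ?_, ?_, ?_, ?_, ?_⟩
  · apply Continuous.if_le (hc.comp3 (by fun_prop) (by fun_prop) (by fun_prop))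
      (gc.comp3 (by fun_prop) (by fun_prop) (by fun_prop)) (by fun_prop) (by fun_prop)
    intro z hz
    rw [hz]; norm_num [h1, g0]
  · intro x u; norm_num [h0]
  · intro x u; norm_num [g1]
  · intro x s
    by_cases hs : s ≤ 1/2 <;> simp only [hs, if_true, if_false, ite_true, ite_false]
    · exact hl x _
    · rw [gl x _]; exact e0 x
  · intro x s
    by_cases hs : s ≤ 1/2 <;> simp only [hs, if_true, if_false, ite_true, ite_false]
    · exact hr x _
    · rw [gr x _]; exact e1 x


/-- concatenation of two families of paths -/
def pcat (p q : X → ℝ → Y) : X → ℝ → Y :=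
  fun x u => if u ≤ 1/2 then p x (2*u) else q x (2*u - 1)

/-- reverse of a family of paths -/
def pinv (p : X → ℝ → Y) : X → ℝ → Y := fun x u => p x (1 - u)

/-- concatenation of three families of paths -/
def pthirds (p q r : X → ℝ → Y) : X → ℝ → Y :=
  fun x u => if u ≤ 1/3 then p x (3*u) else if u ≤ 2/3 then q x (3*u - 1) else r x (3*u - 2)

/-- constant family -/
def pconst (c : X → Y) : X → ℝ → Y := fun x _ => c x

theorem famC.pinv {p : X → ℝ → Y} (hp : famC p) : famC (pinv p) :=
  hp.comp2 (by fun_prop) (by fun_prop)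

/-- the reparametrization lemma : all identities of path algebra -/
theorem RelH.reparam {p : X → ℝ → Y} (hp : famC p) {ψ ψ' : ℝ → ℝ}
    (hψ : Continuous ψ) (hψ' : Continuous ψ')
    (h0 : ψ 0 = ψ' 0) (h1 : ψ 1 = ψ' 1) :
    RelH (fun x u => p x (ψ u)) (fun x u => p x (ψ' u)) := by
  refine ⟨fun x u s => p x ((1-s) * ψ u + s * ψ' u),
    hp.comp2 (by fun_prop) (by fun_prop), ?_, ?_, ?_, ?_⟩
  · intro x u; show p x ((1-0) * ψ u + 0 * ψ' u) = p x (ψ u); norm_num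
  · intro x u; show p x ((1-1) * ψ u + 1 * ψ' u) = p x (ψ' u); norm_num
  · intro x s; show p x ((1-s) * ψ 0 + s * ψ' 0) = p x (ψ 0); rw [← h0]; congr 1; ring
  · intro x s; show p x ((1-s) * ψ 1 + s * ψ' 1) = p x (ψ 1); rw [← h1]; congr 1; ring

theorem RelH.inv {p q : X → ℝ → Y} (h : RelH p q) : RelH (pinv p) (pinv q) := by
  obtain ⟨h, hc, h0, h1, hl, hr⟩ := h
  refine ⟨fun x u s => h x (1-u) s, hc.comp3 (by fun_prop) (by fun_prop) (by fun_prop),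
    ?_, ?_, ?_, ?_⟩
  · intro x u; exact h0 x (1-u)
  · intro x u; exact h1 x (1-u)
  · intro x s; show h x (1-0) s = p x (1-0); norm_num [hr]
  · intro x s; show h x (1-1) s = p x (1-1); norm_num [hl]

theorem RelH.hconcat {p p' q q' : X → ℝ → Y} (h₁ : RelH p p') (h₂ : RelH q q')
    (mid : ∀ x, p x 1 = q x 0) : RelH (pcat p q) (pcat p' q') := by
  have e1 := h₁.end1; have e0 := h₂.end0
  obtain ⟨h, hc, h0, h1, hl, hr⟩ := h₁
  obtain ⟨g, gc, g0, g1, gl, gr⟩ := h₂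
  refine ⟨fun x u s => if u ≤ 1/2 then h x (2*u) s else g x (2*u-1) s, ?_, ?_, ?_, ?_, ?_⟩
  · apply Continuous.if_le (hc.comp3 (by fun_prop) (by fun_prop) (by fun_prop))
      (gc.comp3 (by fun_prop) (by fun_prop) (by fun_prop)) (by fun_prop) (by fun_prop)
    intro z hz
    have h2 : 2 * z.2.1 = 1 := by rw [hz]; ring
    have h3 : 2 * z.2.1 - 1 = 0 := by rw [hz]; ring
    rw [h3, h2, hr, gl, mid]
  · intro x u; by_cases hu : u ≤ 1/2 <;>
      simp only [pcat, hu, if_true, if_false, ite_true, ite_false, h0, g0]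
  · intro x u; by_cases hu : u ≤ 1/2 <;>
      simp only [pcat, hu, if_true, if_false, ite_true, ite_false, h1, g1]
  · intro x s
    have : (0:ℝ) ≤ 1/2 := by norm_num
    simp only [this, if_true, ite_true, pcat]
    show h x (2*0) s = p x (2*0); norm_num [hl]
  · intro x s
    have : ¬ ((1:ℝ) ≤ 1/2) := by norm_num
    simp only [this, if_false, ite_false, pcat]
    show g x (2*1-1) s = q x (2*1-1); norm_num [gr]

theorem RelH.hconcat3 {p p' q q' r r' : X → ℝ → Y}
    (h₁ : RelH p p') (h₂ : RelH q q') (h₃ : RelH r r')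
    (mid1 : ∀ x, p x 1 = q x 0) (mid2 : ∀ x, q x 1 = r x 0) :
    RelH (pthirds p q r) (pthirds p' q' r') := by
  have e1 := h₁.end1; have e0 := h₂.end0; have e1' := h₂.end1; have e0' := h₃.end0
  obtain ⟨h, hc, h0, h1, hl, hr⟩ := h₁
  obtain ⟨g, gc, g0, g1, gl, gr⟩ := h₂
  obtain ⟨k, kc, k0, k1, kl, kr⟩ := h₃
  refine ⟨fun x u s => if u ≤ 1/3 then h x (3*u) s else if u ≤ 2/3 then g x (3*u-1) s
      else k x (3*u-2) s, ?_, ?_, ?_, ?_, ?_⟩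
  · apply Continuous.if_le (hc.comp3 (by fun_prop) (by fun_prop) (by fun_prop))
      ?_ (by fun_prop) (by fun_prop)
    · intro z hz
      have h2 : 3 * z.2.1 = 1 := by rw [hz]; ring
      have h2' : z.2.1 ≤ 2/3 := by rw [hz]; norm_num
      have h3 : 3 * z.2.1 - 1 = 0 := by rw [hz]; ring
      rw [if_pos h2', h3, h2, hr, gl, mid1]
    · apply Continuous.if_le (gc.comp3 (by fun_prop) (by fun_prop) (by fun_prop))
        (kc.comp3 (by fun_prop) (by fun_prop) (by fun_prop)) (by fun_prop) (by fun_prop)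
      intro z hz
      have h2 : 3 * z.2.1 - 1 = 1 := by rw [hz]; ring
      have h3 : 3 * z.2.1 - 2 = 0 := by rw [hz]; ring
      rw [h3, h2, gr, kl, ← mid2, ← e1']
  · intro x u
    by_cases hu : u ≤ 1/3 <;> by_cases hu' : u ≤ 2/3 <;>
      simp only [pthirds, hu, hu', if_true, if_false, ite_true, ite_false, h0, g0, k0]
  · intro x u
    by_cases hu : u ≤ 1/3 <;> by_cases hu' : u ≤ 2/3 <;>
      simp only [pthirds, hu, hu', if_true, if_false, ite_true, ite_false, h1, g1, k1]
  · intro x s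
    have : (0:ℝ) ≤ 1/3 := by norm_num
    simp only [this, if_true, ite_true, pthirds]
    show h x (3*0) s = p x (3*0); norm_num [hl]
  · intro x s
    have c1 : ¬ ((1:ℝ) ≤ 1/3) := by norm_num
    have c2 : ¬ ((1:ℝ) ≤ 2/3) := by norm_num
    simp only [c1, c2, if_false, ite_false, pthirds]
    show k x (3*1-2) s = r x (3*1-2); norm_num [kr]


/-- clamp to [0,1] -/
def cl (r : ℝ) : ℝ := max 0 (min 1 r)

@[fun_prop] theorem cl_cont : Continuous cl := by unfold cl; fun_prop

@[simp] theorem cl_zero : cl 0 = 0 := by norm_num [cl]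
@[simp] theorem cl_one : cl 1 = 1 := by norm_num [cl]
theorem cl_nonneg (r : ℝ) : 0 ≤ cl r := le_max_left _ _
theorem cl_le_one (r : ℝ) : cl r ≤ 1 := by
  apply max_le (by norm_num) (min_le_left _ _)
theorem cl_of_nonpos {r : ℝ} (h : r ≤ 0) : cl r = 0 := by
  have : min 1 r ≤ 0 := le_trans (min_le_right _ _) h
  simp [cl, max_eq_left this]
theorem cl_of_one_le {r : ℝ} (h : 1 ≤ r) : cl r = 1 := by
  rw [cl, min_eq_left h]; norm_num
theorem cl_of_mem {r : ℝ} (h0 : 0 ≤ r) (h1 : r ≤ 1) : cl r = r := by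
  rw [cl, min_eq_right h1, max_eq_right h0]

/-- The filler: a free homotopy square yields a rel-endpoints homotopy from the
concatenation (left edge reversed) ∘ (bottom) ∘ (right edge) to the top edge. -/
theorem RelH.filler {S : X → ℝ → ℝ → Y} (hS : sqC S)
    (hSu : ∀ x u s, S x u s = S x (cl u) s)
    (hSs : ∀ x u s, S x u s = S x u (cl s)) :
    RelH (pthirds (fun x w => S x 0 (1-w)) (fun x w => S x w 0) (fun x w => S x 1 w))
         (fun x u => S x u 1) := by
  refine ⟨fun x u s => if 3 * cl u ≤ 1 - cl s then S x 0 (1 - 3 * cl u)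
      else if 3 * (1 - cl u) ≤ 1 - cl s then S x 1 (3 * cl u - 2)
      else S x ((3 * cl u - (1 - cl s)) / (1 + 2 * cl s)) (cl s), ?_, ?_, ?_, ?_, ?_⟩
  · apply Continuous.if_le
      (hS.comp3 (by fun_prop) (by fun_prop) (by fun_prop [cl_cont]))
      ?_ (by fun_prop [cl_cont]) (by fun_prop [cl_cont])
    · -- outer boundary
      intro z hz
      have hu0 := cl_nonneg z.2.1; have hu1 := cl_le_one z.2.1
      have hs0 := cl_nonneg z.2.2; have hs1 := cl_le_one z.2.2
      rw [if_neg (by intro hcon; linarith)]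
      have e1 : 3 * cl z.2.1 - (1 - cl z.2.2) = 0 := by linarith
      have e2 : 1 - 3 * cl z.2.1 = cl z.2.2 := by linarith
      rw [e1, zero_div, e2]
    · apply Continuous.if_le
        (hS.comp3 (by fun_prop) (by fun_prop) (by fun_prop [cl_cont]))
        (hS.comp3 (by fun_prop) ?_ (by fun_prop [cl_cont])) (by fun_prop [cl_cont])
        (by fun_prop [cl_cont])
      · -- inner boundary
        intro z hz
        have hu0 := cl_nonneg z.2.1; have hu1 := cl_le_one z.2.1
        have hs0 := cl_nonneg z.2.2; have hs1 := cl_le_one z.2.2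
        have hcs : cl z.2.2 = 3 * cl z.2.1 - 2 := by linarith
        have hden : (1 : ℝ) + 2 * cl z.2.2 ≠ 0 := by positivity
        have e1 : (3 * cl z.2.1 - (1 - cl z.2.2)) / (1 + 2 * cl z.2.2) = 1 := by
          rw [div_eq_one_iff_eq hden]; linarith
        rw [e1, ← hcs]
      · -- continuity of the division
        apply Continuous.div (by fun_prop [cl_cont]) (by fun_prop [cl_cont])
        intro z
        have := cl_nonneg z.2.2
        positivity
  · -- s = 0
    intro x u
    dsimp only
    rw [cl_zero]
    have hu0 := cl_nonneg u; have hu1 := cl_le_one u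
    by_cases h1u : u ≤ 1/3
    · rcases le_or_gt 0 u with h0u | h0u
      · rw [cl_of_mem h0u (by linarith)]
        rw [if_pos (show 3 * u ≤ 1 - 0 by linarith), pthirds, if_pos h1u]
      · rw [cl_of_nonpos h0u.le]
        rw [if_pos (show 3 * (0:ℝ) ≤ 1 - 0 by norm_num), pthirds, if_pos h1u]
        rw [hSs x 0 (1 - 3*u), cl_of_one_le (by linarith)]
        norm_num
    · push_neg at h1u
      by_cases h2u : u ≤ 2/3
      · rw [cl_of_mem (by linarith) (by linarith)]
        rw [if_neg (show ¬ (3 * u ≤ 1 - 0) by intro h; linarith), pthirds,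
          if_neg (show ¬ (u ≤ 1/3) by intro h; linarith), if_pos h2u]
        rcases eq_or_lt_of_le h2u with he | hlt
        · have c2 : 3 * (1 - u) ≤ 1 - 0 := by rw [he]; norm_num
          rw [if_pos c2, he]; norm_num
        · rw [if_neg (show ¬ (3 * (1 - u) ≤ 1 - 0) by intro h; linarith)]
          norm_num
      · push_neg at h2u
        rcases le_or_gt u 1 with h3u | h3u
        · rw [cl_of_mem (by linarith) h3u]
          rw [if_neg (show ¬ (3 * u ≤ 1 - 0) by intro h; linarith),
            if_pos (show 3 * (1 - u) ≤ 1 - 0 by linarith), pthirds,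
            if_neg (show ¬ (u ≤ 1/3) by intro h; linarith),
            if_neg (show ¬ (u ≤ 2/3) by intro h; linarith)]
        · rw [cl_of_one_le h3u.le]
          rw [if_neg (show ¬ (3 * (1:ℝ) ≤ 1 - 0) by norm_num),
            if_pos (show 3 * (1 - (1:ℝ)) ≤ 1 - 0 by norm_num), pthirds,
            if_neg (show ¬ (u ≤ 1/3) by intro h; linarith),
            if_neg (show ¬ (u ≤ 2/3) by intro h; linarith)]
          rw [hSs x 1 (3*u-2), cl_of_one_le (by linarith)]
          norm_num
  · -- s = 1
    intro x u
    dsimp only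
    rw [cl_one]
    have hu0 := cl_nonneg u; have hu1 := cl_le_one u
    rcases le_or_gt u 0 with h0u | h0u
    · rw [cl_of_nonpos h0u]
      rw [if_pos (show 3 * (0:ℝ) ≤ 1 - 1 by norm_num)]
      rw [hSu x u 1, cl_of_nonpos h0u]
      norm_num
    · rcases le_or_gt 1 u with h1u | h1u
      · rw [cl_of_one_le h1u]
        rw [if_neg (show ¬ (3 * (1:ℝ) ≤ 1 - 1) by norm_num),
          if_pos (show 3 * (1 - (1:ℝ)) ≤ 1 - 1 by norm_num)]
        rw [hSu x u 1, cl_of_one_le h1u]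
        norm_num
      · rw [cl_of_mem h0u.le h1u.le]
        rw [if_neg (show ¬ (3 * u ≤ 1 - 1) by intro h; linarith),
          if_neg (show ¬ (3 * (1 - u) ≤ 1 - 1) by intro h; linarith)]
        have : (3 * u - (1 - 1)) / (1 + 2 * 1) = u := by field_simp; ring
        rw [this]
  · -- u = 0
    intro x s
    dsimp only
    rw [cl_zero]
    have hs1 := cl_le_one s
    have c1 : 3 * (0:ℝ) ≤ 1 - cl s := by linarith
    rw [if_pos c1]
    rw [pthirds, if_pos (by norm_num : (0:ℝ) ≤ 1/3)]
  · -- u = 1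
    intro x s
    dsimp only
    rw [cl_one]
    have hs0 := cl_nonneg s
    have hs1 := cl_le_one s
    have c1 : ¬ (3 * (1:ℝ) ≤ 1 - cl s) := by intro h; linarith
    have c2 : 3 * (1 - (1:ℝ)) ≤ 1 - cl s := by linarith
    rw [if_neg c1, if_pos c2]
    rw [pthirds, if_neg (by norm_num : ¬ ((1:ℝ) ≤ 1/3)), if_neg (by norm_num : ¬ ((1:ℝ) ≤ 2/3))]


section Cancel

variable {ℓ p q : X → ℝ → Y}

/-- cancellation: if `q ≃ ℓ⁻¹ ⬝ p ⬝ q` rel endpoints then `ℓ ≃ p` rel endpoints. -/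
theorem RelH.cancel (hℓ : famC ℓ) (hp : famC p) (hq : famC q)
    (e1 : ∀ x, ℓ x 0 = p x 0) (e2 : ∀ x, ℓ x 1 = q x 0) (e3 : ∀ x, p x 1 = q x 0)
    (H : RelH q (pthirds (pinv ℓ) p q)) : RelH ℓ p := by
  classical
  -- step A1 : ℓ ≃ ℓ ⬝ const
  have hψ1 : Continuous fun u : ℝ => if u ≤ 1/2 then 2*u else 1 :=
    Continuous.if_le (by fun_prop) (by fun_prop) (by fun_prop) (by fun_prop)
      (by intro x hx; rw [hx]; norm_num)
  have A1 : RelH ℓ (pcat ℓ (pconst (fun x => ℓ x 1))) := by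
    refine (RelH.reparam hℓ (ψ := id) (ψ' := fun u => if u ≤ 1/2 then 2*u else 1)
      continuous_id hψ1 (by norm_num) (by norm_num)).cast (fun x u => rfl) ?_
    intro x u
    simp only [pcat, pconst]
    by_cases hu : u ≤ 1/2
    · rw [if_pos hu, if_pos hu]
    · rw [if_neg hu, if_neg hu]
  -- step A2 : const (q 0) ≃ q ⬝ q⁻¹
  have hψ2 : Continuous fun u : ℝ => if u ≤ 1/2 then 2*u else 2-2*u :=
    Continuous.if_le (by fun_prop) (by fun_prop) (by fun_prop) (by fun_prop)
      (by intro x hx; rw [hx]; norm_num)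
  have A2 : RelH (pconst (fun x => q x 0)) (pcat q (pinv q)) := by
    refine (RelH.reparam hq (ψ := fun _ => 0) (ψ' := fun u => if u ≤ 1/2 then 2*u else 2-2*u)
      continuous_const hψ2 (by norm_num) (by norm_num)).cast (fun x u => rfl) ?_
    intro x u
    simp only [pcat, pinv]
    by_cases hu : u ≤ 1/2
    · rw [if_pos hu, if_pos hu]
    · rw [if_neg hu, if_neg hu]; congr 1; ring
  -- step B
  have B : RelH (pcat ℓ (pconst (fun x => ℓ x 1))) (pcat ℓ (pcat q (pinv q))) := by
    refine RelH.hconcat (RelH.refl hℓ) (A2.cast (fun x u => ?_) (fun x u => rfl))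
      (fun x => rfl)
    simp only [pconst, e2]
  -- step C
  have mid2 : ∀ x, q x 1 = pinv q x 0 := by intro x; simp [pinv]
  have C : RelH (pcat ℓ (pcat q (pinv q)))
      (pcat ℓ (pcat (pthirds (pinv ℓ) p q) (pinv q))) := by
    refine RelH.hconcat (RelH.refl hℓ) (RelH.hconcat H (RelH.refl hq.pinv) mid2) ?_
    intro x; simp only [pcat]
    rw [if_pos (show (0:ℝ) ≤ 1/2 by norm_num), e2]
    norm_num
  -- the common 5-fold concatenation
  set C5 : X → ℝ → Y := fun x u => if u ≤ 1/5 then ℓ x (5*u) else if u ≤ 2/5 then ℓ x (2-5*u)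
    else if u ≤ 3/5 then p x (5*u-2) else if u ≤ 4/5 then q x (5*u-3) else q x (5-5*u)
    with hC5def
  have hC5 : famC C5 := by
    apply Continuous.if_le (hℓ.comp2 (by fun_prop) (by fun_prop)) ?_ (by fun_prop) (by fun_prop)
    · intro z hz
      rw [if_pos (show z.2 ≤ 2/5 by rw [hz]; norm_num)]
      rw [hz]; norm_num
    · apply Continuous.if_le (hℓ.comp2 (by fun_prop) (by fun_prop)) ?_ (by fun_prop) (by fun_prop)
      · intro z hz
        rw [if_pos (show z.2 ≤ 3/5 by rw [hz]; norm_num)]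
        rw [hz]
        norm_num [e1]
      · apply Continuous.if_le (hp.comp2 (by fun_prop) (by fun_prop)) ?_ (by fun_prop)
          (by fun_prop)
        · intro z hz
          rw [if_pos (show z.2 ≤ 4/5 by rw [hz]; norm_num)]
          rw [hz]
          norm_num [e3]
        · apply Continuous.if_le (hq.comp2 (by fun_prop) (by fun_prop))
            (hq.comp2 (by fun_prop) (by fun_prop)) (by fun_prop) (by fun_prop)
          intro z hz
          rw [hz]; norm_num
  -- reparametrizations
  set ψX : ℝ → ℝ := fun u => if u ≤ 1/2 then 2*u/5 else if u ≤ 3/4 then (12*u-5)/5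
    else (1+4*u)/5 with hψXdef
  set ψZ : ℝ → ℝ := fun u => if u ≤ 3/4 then 4*u/5 else (8*u-3)/5 with hψZdef
  have hψX : Continuous ψX := by
    apply Continuous.if_le (by fun_prop) ?_ (by fun_prop) (by fun_prop)
    · intro x hx; rw [if_pos (show x ≤ 3/4 by rw [hx]; norm_num), hx]; norm_num
    · apply Continuous.if_le (by fun_prop) (by fun_prop) (by fun_prop) (by fun_prop)
      intro x hx; rw [hx]; norm_num
  have hψZ : Continuous ψZ := by
    apply Continuous.if_le (by fun_prop) (by fun_prop) (by fun_prop) (by fun_prop)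
    intro x hx; rw [hx]; norm_num
  have D0 : RelH (fun x u => C5 x (ψX u)) (fun x u => C5 x (ψZ u)) := by
    refine RelH.reparam hC5 hψX hψZ ?_ ?_ <;> norm_num [hψXdef, hψZdef]
  have EX : ∀ x u, C5 x (ψX u) = pcat ℓ (pcat (pthirds (pinv ℓ) p q) (pinv q)) x u := by
    intro x u
    simp only [hψXdef, hC5def, pcat, pinv, pthirds]
    by_cases c1 : u ≤ 1/2
    · rw [if_pos c1, if_pos c1, if_pos (show 2*u/5 ≤ 1/5 by linarith)]
      congr 1; ring
    · rw [if_neg c1, if_neg c1]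
      by_cases c2 : u ≤ 3/4
      · rw [if_pos c2, if_pos (show 2*u-1 ≤ 1/2 by linarith),
          if_neg (show ¬ ((12*u-5)/5 ≤ 1/5) by intro h; push_neg at c1; linarith)]
        by_cases c3 : u ≤ 7/12
        · rw [if_pos (show (12*u-5)/5 ≤ 2/5 by linarith),
            if_pos (show 2*(2*u-1) ≤ 1/3 by linarith)]
          congr 1; ring
        · rw [if_neg (show ¬ ((12*u-5)/5 ≤ 2/5) by intro h; push_neg at c3; linarith),
            if_neg (show ¬ (2*(2*u-1) ≤ 1/3) by intro h; push_neg at c3; linarith)]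
          by_cases c4 : u ≤ 2/3
          · rw [if_pos (show (12*u-5)/5 ≤ 3/5 by linarith),
              if_pos (show 2*(2*u-1) ≤ 2/3 by linarith)]
            congr 1; ring
          · rw [if_neg (show ¬ ((12*u-5)/5 ≤ 3/5) by intro h; push_neg at c4; linarith),
              if_neg (show ¬ (2*(2*u-1) ≤ 2/3) by intro h; push_neg at c4; linarith),
              if_pos (show (12*u-5)/5 ≤ 4/5 by linarith)]
            congr 1; ring
      · rw [if_neg c2, if_neg (show ¬ (2*u-1 ≤ 1/2) by intro h; push_neg at c2; linarith),
          if_neg (show ¬ ((1+4*u)/5 ≤ 1/5) by intro h; push_neg at c1; linarith),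
          if_neg (show ¬ ((1+4*u)/5 ≤ 2/5) by intro h; push_neg at c1; linarith),
          if_neg (show ¬ ((1+4*u)/5 ≤ 3/5) by intro h; push_neg at c2; linarith),
          if_neg (show ¬ ((1+4*u)/5 ≤ 4/5) by intro h; push_neg at c2; linarith)]
        congr 1; ring
  have EZ : ∀ x u, C5 x (ψZ u) = pcat (pcat ℓ (pinv ℓ)) (pcat p (pcat q (pinv q))) x u := by
    intro x u
    simp only [hψZdef, hC5def, pcat, pinv, pthirds]
    by_cases c1 : u ≤ 3/4
    · rw [if_pos c1]
      by_cases c2 : u ≤ 1/2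
      · rw [if_pos c2]
        by_cases c3 : u ≤ 1/4
        · rw [if_pos (show 2*u ≤ 1/2 by linarith), if_pos (show 4*u/5 ≤ 1/5 by linarith)]
          congr 1; ring
        · rw [if_neg (show ¬ (2*u ≤ 1/2) by intro h; push_neg at c3; linarith),
            if_neg (show ¬ (4*u/5 ≤ 1/5) by intro h; push_neg at c3; linarith),
            if_pos (show 4*u/5 ≤ 2/5 by linarith)]
          congr 1; ring
      · rw [if_neg c2, if_pos (show 2*u-1 ≤ 1/2 by linarith),
          if_neg (show ¬ (4*u/5 ≤ 1/5) by intro h; push_neg at c2; linarith),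
          if_neg (show ¬ (4*u/5 ≤ 2/5) by intro h; push_neg at c2; linarith),
          if_pos (show 4*u/5 ≤ 3/5 by linarith)]
        congr 1; ring
    · rw [if_neg c1, if_neg (show ¬ (u ≤ 1/2) by intro h; push_neg at c1; linarith),
        if_neg (show ¬ (2*u-1 ≤ 1/2) by intro h; push_neg at c1; linarith),
        if_neg (show ¬ ((8*u-3)/5 ≤ 1/5) by intro h; push_neg at c1; linarith),
        if_neg (show ¬ ((8*u-3)/5 ≤ 2/5) by intro h; push_neg at c1; linarith),
        if_neg (show ¬ ((8*u-3)/5 ≤ 3/5) by intro h; push_neg at c1; linarith)]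
      by_cases c2 : u ≤ 7/8
      · rw [if_pos (show (8*u-3)/5 ≤ 4/5 by linarith),
          if_pos (show 2*(2*u-1)-1 ≤ 1/2 by linarith)]
        congr 1; ring
      · rw [if_neg (show ¬ ((8*u-3)/5 ≤ 4/5) by intro h; push_neg at c2; linarith),
          if_neg (show ¬ (2*(2*u-1)-1 ≤ 1/2) by intro h; push_neg at c2; linarith)]
        congr 1; ring

  have D : RelH (pcat ℓ (pcat (pthirds (pinv ℓ) p q) (pinv q)))
      (pcat (pcat ℓ (pinv ℓ)) (pcat p (pcat q (pinv q)))) := D0.cast EX EZ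
  -- step E
  have E1 : RelH (pcat ℓ (pinv ℓ)) (pconst (fun x => ℓ x 0)) := by
    refine (RelH.reparam hℓ (ψ := fun u => if u ≤ 1/2 then 2*u else 2-2*u) (ψ' := fun _ => 0)
      hψ2 continuous_const (by norm_num) (by norm_num)).cast ?_ (fun x u => rfl)
    intro x u
    simp only [pcat, pinv]
    by_cases hu : u ≤ 1/2
    · rw [if_pos hu, if_pos hu]
    · rw [if_neg hu, if_neg hu]; congr 1; ring
  have E : RelH (pcat (pcat ℓ (pinv ℓ)) (pcat p (pcat q (pinv q))))
      (pcat (pconst (fun x => ℓ x 0)) (pcat p (pconst (fun x => q x 0)))) := by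
    refine RelH.hconcat E1 (RelH.hconcat (RelH.refl hp) A2.symm ?_) ?_
    · intro x; simp only [pcat]
      rw [if_pos (show (0:ℝ) ≤ 1/2 by norm_num), e3]
      norm_num
    · intro x; simp only [pcat, pinv]
      rw [if_neg (show ¬ ((1:ℝ) ≤ 1/2) by norm_num),
        if_pos (show (0:ℝ) ≤ 1/2 by norm_num),
        show (1:ℝ) - (2*1-1) = 0 by ring, e1]
      norm_num
  -- step F
  set ψW : ℝ → ℝ := fun u => if u ≤ 1/2 then 0 else if u ≤ 3/4 then 4*u-2 else 1 with hψWdef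
  have hψW : Continuous ψW := by
    apply Continuous.if_le (by fun_prop) ?_ (by fun_prop) (by fun_prop)
    · intro x hx; rw [if_pos (show x ≤ 3/4 by rw [hx]; norm_num), hx]; norm_num
    · apply Continuous.if_le (by fun_prop) (by fun_prop) (by fun_prop) (by fun_prop)
      intro x hx; rw [hx]; norm_num
  have F : RelH (pcat (pconst (fun x => ℓ x 0)) (pcat p (pconst (fun x => q x 0)))) p := by
    refine (RelH.reparam hp (ψ := ψW) (ψ' := id) hψW continuous_id ?_ ?_).cast ?_ (fun x u => rfl)
    · norm_num [hψWdef]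
    · norm_num [hψWdef]
    · intro x u
      simp only [hψWdef, pcat, pconst]
      by_cases c1 : u ≤ 1/2
      · rw [if_pos c1, if_pos c1, e1]
      · rw [if_neg c1, if_neg c1]
        by_cases c2 : u ≤ 3/4
        · rw [if_pos (show 2*u-1 ≤ 1/2 by linarith), if_pos c2]
          congr 1; ring
        · rw [if_neg (show ¬ (2*u-1 ≤ 1/2) by intro h; push_neg at c2; linarith), if_neg c2,
            ← e3]
  exact ((((A1.trans B).trans C).trans D).trans E).trans F

end Cancel


theorem pthirds_congr {f g h f' g' h' : X → ℝ → Y}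
    (hf : ∀ x w, f x w = f' x w) (hg : ∀ x w, g x w = g' x w)
    (hh : ∀ x w, h x w = h' x w) :
    ∀ x u, pthirds f g h x u = pthirds f' g' h' x u := by
  intro x u
  unfold pthirds
  split_ifs <;> first | apply hf | apply hg | apply hh

section Triangle

variable {A B : Type*} [TopologicalSpace A] [TopologicalSpace B]

/-- the triangle-identity construction: a modified counit `Kp` for the homotopy
equivalence together with a square `Λ` interpolating between `Kp (α a)` and `α (G a)`. -/
theorem lambda_exists (α : A → B) (β : B → A) (G : A × I → A) (K : B × I → B)
    (hα : Continuous α) (hβ : Continuous β) (hG : Continuous G) (hK : Continuous K)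
    (hG0 : ∀ a, G (a, 0) = β (α a)) (hG1 : ∀ a, G (a, 1) = a)
    (hK0 : ∀ b, K (b, 0) = α (β b)) (hK1 : ∀ b, K (b, 1) = b) :
    ∃ Kp : B → ℝ → B, ∃ Λ : A → ℝ → ℝ → B,
      famC Kp ∧ sqC Λ ∧
      (∀ b, Kp b 0 = α (β b)) ∧
      (∀ b, Kp b 1 = b) ∧
      (∀ a u, Λ a u 0 = Kp (α a) u) ∧
      (∀ a u, Λ a u 1 = α (G (a, Set.projIcc 0 1 zero_le_one u))) ∧
      (∀ a s, Λ a 0 s = α (β (α a))) ∧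
      (∀ a s, Λ a 1 s = α a) := by
  classical
  set g : A → ℝ → A := fun a t => G (a, Set.projIcc 0 1 zero_le_one t) with hgdef
  set k : B → ℝ → B := fun b t => K (b, Set.projIcc 0 1 zero_le_one t) with hkdef
  have hproj_cl : ∀ t : ℝ, Set.projIcc (0:ℝ) 1 zero_le_one t
      = Set.projIcc 0 1 zero_le_one (cl t) := by
    intro t
    rcases le_total t 0 with h | h
    · rw [Set.projIcc_of_le_left _ h, cl_of_nonpos h, Set.projIcc_left]
    · rcases le_total 1 t with h1 | h1
      · rw [Set.projIcc_of_right_le _ h1, cl_of_one_le h1, Set.projIcc_right]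
      · rw [cl_of_mem h h1]
  have gcl : ∀ a t, g a t = g a (cl t) := by
    intro a t; rw [hgdef]; dsimp only; rw [hproj_cl]
  have kcl : ∀ b t, k b t = k b (cl t) := by
    intro b t; rw [hkdef]; dsimp only; rw [hproj_cl]
  have g0 : ∀ a, g a 0 = β (α a) := by
    intro a; rw [hgdef]; dsimp only; rw [Set.projIcc_left]; exact hG0 a
  have g1 : ∀ a, g a 1 = a := by
    intro a; rw [hgdef]; dsimp only; rw [Set.projIcc_right]; exact hG1 a
  have k0 : ∀ b, k b 0 = α (β b) := by
    intro b; rw [hkdef]; dsimp only; rw [Set.projIcc_left]; exact hK0 b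
  have k1 : ∀ b, k b 1 = b := by
    intro b; rw [hkdef]; dsimp only; rw [Set.projIcc_right]; exact hK1 b
  have hgc : famC g := by
    rw [hgdef]; exact hG.comp (continuous_fst.prodMk (continuous_projIcc.comp continuous_snd))
  have hkc : famC k := by
    rw [hkdef]; exact hK.comp (continuous_fst.prodMk (continuous_projIcc.comp continuous_snd))
  -- path families
  set P0 : A → ℝ → B := fun a w => k (α (β (α a))) w with hP0
  set P1 : A → ℝ → B := fun a w => k (α a) w with hP1
  set R : A → ℝ → B := fun a w => α (β (k (α a) w)) with hR
  set Q0 : A → ℝ → B := fun a w => α (g (β (α a)) w) with hQ0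
  set Q1 : A → ℝ → B := fun a w => α (g a w) with hQ1
  set E : A → ℝ → B := fun a w => α (β (α (g a w))) with hE
  have hP0c : famC P0 := hkc.comp2 (by fun_prop) (by fun_prop)
  have hP1c : famC P1 := hkc.comp2 (by fun_prop) (by fun_prop)
  have hRc : famC R := (hα.comp hβ).comp (hkc.comp2 (by fun_prop) (by fun_prop))
  have hQ0c : famC Q0 := hα.comp (hgc.comp2 (by fun_prop) (by fun_prop))
  have hQ1c : famC Q1 := hα.comp (hgc.comp2 (by fun_prop) (by fun_prop))
  have hEc : famC E := (hα.comp hβ).comp (hα.comp (hgc.comp2 (by fun_prop) (by fun_prop)))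
  -- squares and their fillers
  have fΘ : RelH (pthirds (pinv R) P0 P1) P1 := by
    have := RelH.filler (S := fun (a : A) (u s : ℝ) => k (k (α a) s) u)
      ((hkc.comp2 (hkc.comp2 (by fun_prop) (by fun_prop)) (by fun_prop)))
      (fun a u s => by rw [kcl (k (α a) s) u])
      (fun a u s => by rw [kcl (α a) s])
    refine this.cast ?_ ?_
    · apply pthirds_congr
      · intro a w; rw [hR]; dsimp only [pinv]; rw [k0]
      · intro a w; rw [hP0]; dsimp only; rw [k0]
      · intro a w; rw [hP1]; dsimp only; rw [k1]
    · intro a u; rw [hP1]; dsimp only; rw [k1]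
  have fΩ : RelH (pthirds (pinv E) Q0 Q1) Q1 := by
    have := RelH.filler (S := fun (a : A) (u s : ℝ) => α (g (g a s) u))
      (hα.comp (hgc.comp2 (hgc.comp2 (by fun_prop) (by fun_prop)) (by fun_prop)))
      (fun a u s => by rw [gcl (g a s) u])
      (fun a u s => by rw [gcl a s])
    refine this.cast ?_ ?_
    · apply pthirds_congr
      · intro a w; rw [hE]; dsimp only [pinv]; rw [g0]
      · intro a w; rw [hQ0]; dsimp only; rw [g0]
      · intro a w; rw [hQ1]; dsimp only; rw [g1]
    · intro a u; rw [hQ1]; dsimp only; rw [g1]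
  have fSig : RelH (pthirds (pinv P0) E P1) Q1 := by
    have := RelH.filler (S := fun (a : A) (u s : ℝ) => k (α (g a u)) s)
      (hkc.comp2 (hα.comp (hgc.comp2 (by fun_prop) (by fun_prop))) (by fun_prop))
      (fun a u s => by rw [gcl a u])
      (fun a u s => by rw [kcl (α (g a u)) s])
    refine this.cast ?_ ?_
    · apply pthirds_congr
      · intro a w; rw [hP0]; dsimp only [pinv]; rw [g0]
      · intro a w; rw [hE]; dsimp only; rw [k0]
      · intro a w; rw [hP1]; dsimp only; rw [g1]
    · intro a u; rw [hQ1]; dsimp only; rw [k1]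
  -- the two cancellation steps
  have L1 : RelH R P0 := by
    refine RelH.cancel hRc hP0c hP1c ?_ ?_ ?_ fΘ.symm
    · intro a; rw [hR, hP0]; dsimp only; rw [k0, k0]
    · intro a; rw [hR, hP1]; dsimp only; rw [k1, k0]
    · intro a; rw [hP0, hP1]; dsimp only; rw [k1, k0]
  have L2 : RelH E Q0 := by
    refine RelH.cancel hEc hQ0c hQ1c ?_ ?_ ?_ fΩ.symm
    · intro a; rw [hE, hQ0]; dsimp only; rw [g0, g0]
    · intro a; rw [hE, hQ1]; dsimp only; rw [g1, g0]
    · intro a; rw [hQ0, hQ1]; dsimp only; rw [g1, g0]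
  -- assembling
  have L3 : RelH (pthirds (pinv R) Q0 P1) (pthirds (pinv P0) E P1) := by
    refine RelH.hconcat3 L1.inv L2.symm (RelH.refl hP1c) ?_ ?_
    · intro a; dsimp only [pinv]; rw [hR, hQ0]; dsimp only
      rw [show (1:ℝ) - 1 = 0 by ring, k0, g0]
    · intro a; rw [hQ0, hP1]; dsimp only; rw [g1, k0]
  have L4 : RelH (pthirds (pinv R) Q0 P1) Q1 := L3.trans fSig
  -- extract the data
  obtain ⟨Λ, hΛc, hΛ0, hΛ1, hΛl, hΛr⟩ := L4
  refine ⟨fun b u => if u ≤ 1/3 then α (β (k b (1 - 3*u)))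
    else if u ≤ 2/3 then α (g (β b) (3*u-1)) else k b (3*u-2), Λ, ?_, hΛc, ?_, ?_, ?_, ?_, ?_, ?_⟩
  · -- continuity of Kp
    apply Continuous.if_le ((hα.comp hβ).comp (hkc.comp2 (by fun_prop) (by fun_prop))) ?_
      (by fun_prop) (by fun_prop)
    · intro z hz; dsimp only [Function.comp]
      rw [if_pos (show z.2 ≤ 2/3 by rw [hz]; norm_num), hz,
        show (1:ℝ) - 3*(1/3) = 0 by ring, show (3:ℝ)*(1/3)-1 = 0 by ring, k0, g0]
    · apply Continuous.if_le (hα.comp (hgc.comp2 (by fun_prop) (by fun_prop)))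
        (hkc.comp2 (by fun_prop) (by fun_prop)) (by fun_prop) (by fun_prop)
      intro z hz; dsimp only [Function.comp]
      rw [hz, show (3:ℝ)*(2/3)-1 = 1 by ring, show (3:ℝ)*(2/3)-2 = 0 by ring, k0, g1]
  · -- Kp b 0
    intro b
    dsimp only
    rw [if_pos (show (0:ℝ) ≤ 1/3 by norm_num), show (1:ℝ) - 3*0 = 1 by ring, k1]
  · -- Kp b 1
    intro b
    dsimp only
    rw [if_neg (show ¬ ((1:ℝ) ≤ 1/3) by norm_num), if_neg (show ¬ ((1:ℝ) ≤ 2/3) by norm_num),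
      show (3:ℝ)*1-2 = 1 by ring, k1]
  · -- Λ a u 0 = Kp (α a) u
    intro a u
    simp only [hΛ0, pthirds, pinv, hR, hQ0, hP1]
  · -- Λ a u 1
    intro a u
    rw [hΛ1, hQ1]
  · -- left edge
    intro a s
    rw [hΛl]
    dsimp only [pthirds, pinv]
    rw [if_pos (show (0:ℝ) ≤ 1/3 by norm_num)]
    rw [hR]; dsimp only
    rw [show (1:ℝ) - 3*0 = 1 by ring, k1]
  · -- right edge
    intro a s
    rw [hΛr]
    dsimp only [pthirds, pinv]
    rw [if_neg (show ¬ ((1:ℝ) ≤ 1/3) by norm_num), if_neg (show ¬ ((1:ℝ) ≤ 2/3) by norm_num)]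
    rw [hP1]; dsimp only
    rw [show (3:ℝ)*1-2 = 1 by ring, k1]

end Triangle


/-- pasting lemma for two closed sets -/
theorem glue_closed {W Y' : Type*} [TopologicalSpace W] [TopologicalSpace Y']
    {s t : Set W} {F : W → Y'} (hs : IsClosed s) (ht : IsClosed t)
    (hcov : ∀ w, w ∈ s ∪ t) (hFs : ContinuousOn F s) (hFt : ContinuousOn F t) :
    Continuous F := by
  rw [continuous_iff_isClosed]
  intro C hC
  have hset : F ⁻¹' C = (s ∩ F ⁻¹' C) ∪ (t ∩ F ⁻¹' C) := by
    ext w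
    constructor
    · intro hw
      rcases hcov w with h | h
      · exact Or.inl ⟨h, hw⟩
      · exact Or.inr ⟨h, hw⟩
    · rintro (⟨_, hw⟩ | ⟨_, hw⟩) <;> exact hw
  rw [hset]
  exact (hFs.preimage_isClosed_of_isClosed hs hC).union
    (hFt.preimage_isClosed_of_isClosed ht hC)

end StmtAux14

open StmtAux14 in
set_option maxHeartbeats 1000000 in
/-- If `α : A → B` is a continuous homotopy equivalence, `f : 𝔹ₙ → B` is continuous, and
`φ : ∂𝔹ₙ → A` is a continuous lift of `f` on the boundary sphere, then `f` can be
deformed rel `∂𝔹ₙ` to a map `α ∘ F` where `F : 𝔹ₙ → A` is continuous and extends `φ`. -/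
theorem stmt14 (n : ℕ) (A B : Type*) [TopologicalSpace A] [TopologicalSpace B]
    (α : A → B) (hα : Continuous α)
    (hequiv : ∃ β : B → A, Continuous β ∧
      (∃ G : A × I → A, Continuous G ∧ (∀ a, G (a, 0) = β (α a)) ∧ ∀ a, G (a, 1) = a) ∧
      (∃ G : B × I → B, Continuous G ∧ (∀ b, G (b, 0) = α (β b)) ∧ ∀ b, G (b, 1) = b))
    (f : {x : EuclideanSpace ℝ (Fin n) // ‖x‖ ≤ 1} → B) (hf : Continuous f)
    (φ : {x : EuclideanSpace ℝ (Fin n) // ‖x‖ = 1} → A) (hφ : Continuous φ)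
    (hlift : ∀ x : {x : EuclideanSpace ℝ (Fin n) // ‖x‖ = 1},
      α (φ x) = f ⟨x.1, le_of_eq x.2⟩) :
    ∃ F : {x : EuclideanSpace ℝ (Fin n) // ‖x‖ ≤ 1} → A, Continuous F ∧
      (∀ x : {x : EuclideanSpace ℝ (Fin n) // ‖x‖ = 1}, F ⟨x.1, le_of_eq x.2⟩ = φ x) ∧
      ∃ H : {x : EuclideanSpace ℝ (Fin n) // ‖x‖ ≤ 1} × I → B,
        Continuous H ∧
        (∀ x, H (x, 0) = f x) ∧
        (∀ x, H (x, 1) = α (F x)) ∧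
        ∀ (x : {x : EuclideanSpace ℝ (Fin n) // ‖x‖ = 1}) (t : I),
          H (⟨x.1, le_of_eq x.2⟩, t) = f ⟨x.1, le_of_eq x.2⟩ := by
  classical
  obtain ⟨β, hβ, ⟨G, hGc, hG0, hG1⟩, ⟨K, hKc, hK0, hK1⟩⟩ := hequiv
  obtain ⟨Kp, Λ, hKpc, hΛc, hKp0, hKp1, hΛ0, hΛ1, hΛl, hΛr⟩ :=
    lambda_exists α β G K hα hβ hGc hKc hG0 hG1 hK0 hK1
  -- basic facts about the radial stretching
  have hnormc : Continuous fun x : {x : EuclideanSpace ℝ (Fin n) // ‖x‖ ≤ 1} => ‖x.1‖ :=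
    continuous_subtype_val.norm
  have hmaxpos : ∀ x : {x : EuclideanSpace ℝ (Fin n) // ‖x‖ ≤ 1}, (0:ℝ) < max ‖x.1‖ (1/2) :=
    fun x => lt_of_lt_of_le (by norm_num) (le_max_right _ _)
  have hρb : ∀ x : {x : EuclideanSpace ℝ (Fin n) // ‖x‖ ≤ 1},
      ‖(max ‖x.1‖ (1/2))⁻¹ • x.1‖ ≤ 1 := by
    intro x
    rw [norm_smul, norm_inv, Real.norm_eq_abs, abs_of_pos (hmaxpos x), inv_mul_eq_div,
      div_le_one (hmaxpos x)]
    exact le_max_left _ _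
  set ρ : {x : EuclideanSpace ℝ (Fin n) // ‖x‖ ≤ 1} → {x : EuclideanSpace ℝ (Fin n) // ‖x‖ ≤ 1} :=
    fun x => ⟨(max ‖x.1‖ (1/2))⁻¹ • x.1, hρb x⟩ with hρdef
  have hρc : Continuous ρ := by
    rw [hρdef]
    exact Continuous.subtype_mk (((hnormc.max continuous_const).inv₀
      (fun x => (hmaxpos x).ne')).smul continuous_subtype_val) _
  have hsph : ∀ x : {x : EuclideanSpace ℝ (Fin n) // ‖x‖ ≤ 1}, 1/2 ≤ ‖x.1‖ → ‖(ρ x).1‖ = 1 := by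
    intro x h
    rw [hρdef]
    dsimp only
    rw [norm_smul, norm_inv, Real.norm_eq_abs, abs_of_pos (hmaxpos x), max_eq_left h,
      inv_mul_eq_div, div_self (by linarith)]
  have hρ_eq : ∀ x : {x : EuclideanSpace ℝ (Fin n) // ‖x‖ ≤ 1}, ‖x.1‖ = 1 → ρ x = x := by
    intro x h
    rw [hρdef]
    apply Subtype.ext
    dsimp only
    rw [h, max_eq_left (by norm_num), inv_one, one_smul]
  have hfρ : ∀ (x : {x : EuclideanSpace ℝ (Fin n) // ‖x‖ ≤ 1}) (h : 1/2 ≤ ‖x.1‖),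
      f (ρ x) = α (φ ⟨(ρ x).1, hsph x h⟩) := by
    intro x h
    rw [hlift ⟨(ρ x).1, hsph x h⟩]
  -- the radial reparametrization used in stage 1
  set m : {x : EuclideanSpace ℝ (Fin n) // ‖x‖ ≤ 1} → ℝ → ℝ :=
    fun x t => min (1 + cl t) (max ‖x.1‖ (1 + cl t)⁻¹)⁻¹ with hmdef
  have hclt : ∀ t : ℝ, (0:ℝ) < 1 + cl t := fun t => by
    have := cl_nonneg t; linarith
  have hmaxpos' : ∀ (x : {x : EuclideanSpace ℝ (Fin n) // ‖x‖ ≤ 1}) (t : ℝ),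
      (0:ℝ) < max ‖x.1‖ (1 + cl t)⁻¹ :=
    fun x t => lt_of_lt_of_le (inv_pos.2 (hclt t)) (le_max_right _ _)
  have hinv1 : Continuous fun z : {x : EuclideanSpace ℝ (Fin n) // ‖x‖ ≤ 1} × ℝ =>
      (1 + cl z.2)⁻¹ :=
    Continuous.inv₀ (by fun_prop [cl_cont]) (fun z => (hclt z.2).ne')
  have hmc : Continuous fun z : {x : EuclideanSpace ℝ (Fin n) // ‖x‖ ≤ 1} × ℝ => m z.1 z.2 := by
    rw [hmdef]
    exact Continuous.min (by fun_prop [cl_cont])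
      (Continuous.inv₀ ((hnormc.comp continuous_fst).max hinv1)
        (fun z => (hmaxpos' z.1 z.2).ne'))
  have hmb : ∀ (x : {x : EuclideanSpace ℝ (Fin n) // ‖x‖ ≤ 1}) (t : ℝ), ‖m x t • x.1‖ ≤ 1 := by
    intro x t
    rw [hmdef]
    dsimp only
    rw [norm_smul, Real.norm_eq_abs,
      abs_of_nonneg (le_min (hclt t).le (inv_pos.2 (hmaxpos' x t)).le)]
    calc min (1 + cl t) (max ‖x.1‖ (1 + cl t)⁻¹)⁻¹ * ‖x.1‖
        ≤ (max ‖x.1‖ (1 + cl t)⁻¹)⁻¹ * ‖x.1‖ :=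
          mul_le_mul_of_nonneg_right (min_le_right _ _) (norm_nonneg _)
      _ ≤ 1 := by
          rw [inv_mul_eq_div, div_le_one (hmaxpos' x t)]
          exact le_max_left _ _
  set sq1 : {x : EuclideanSpace ℝ (Fin n) // ‖x‖ ≤ 1} → ℝ →
      {x : EuclideanSpace ℝ (Fin n) // ‖x‖ ≤ 1} :=
    fun x t => ⟨m x t • x.1, hmb x t⟩ with hsq1def
  have hsq1c : Continuous fun z : {x : EuclideanSpace ℝ (Fin n) // ‖x‖ ≤ 1} × ℝ =>
      sq1 z.1 z.2 := by
    rw [hsq1def]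
    exact Continuous.subtype_mk (hmc.smul (continuous_subtype_val.comp continuous_fst)) _
  have hm0 : ∀ x, m x 0 = 1 := by
    intro x
    rw [hmdef]
    dsimp only
    rw [cl_zero, show (1:ℝ) + 0 = 1 by norm_num, inv_one, max_eq_right x.2, inv_one, min_self]
  have hm1 : ∀ x, m x 1 = (max ‖x.1‖ (1/2))⁻¹ := by
    intro x
    rw [hmdef]
    dsimp only
    rw [cl_one, show (1:ℝ) + 1 = 2 by norm_num, show (2:ℝ)⁻¹ = 1/2 by norm_num]
    refine min_eq_right ?_
    have h1 : (1/2 : ℝ) ≤ max ‖x.1‖ (1/2) := le_max_right _ _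
    have h2 : (0:ℝ) < max ‖x.1‖ (1/2) := hmaxpos x
    rw [inv_eq_one_div, div_le_iff₀ h2]
    linarith
  have hmS : ∀ x, ‖x.1‖ = 1 → ∀ t, m x t = 1 := by
    intro x hx t
    rw [hmdef]
    dsimp only
    have h1 : (1 + cl t)⁻¹ ≤ 1 := by
      rw [inv_eq_one_div, div_le_one (hclt t)]
      linarith [cl_nonneg t]
    rw [hx, max_eq_left h1, inv_one, min_eq_right (by linarith [cl_nonneg t])]
  have hsq10 : ∀ x, sq1 x 0 = x := by
    intro x
    rw [hsq1def]
    apply Subtype.ext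
    dsimp only
    rw [hm0, one_smul]
  have hsq11 : ∀ x, sq1 x 1 = ρ x := by
    intro x
    rw [hsq1def, hρdef]
    apply Subtype.ext
    dsimp only
    rw [hm1]
  have hsq1S : ∀ x, ‖x.1‖ = 1 → ∀ t, sq1 x t = x := by
    intro x hx t
    rw [hsq1def]
    apply Subtype.ext
    dsimp only
    rw [hmS x hx, one_smul]
  -- stage 2 and stage 3 of the homotopy
  have hnorm2 : Continuous fun z : {x : EuclideanSpace ℝ (Fin n) // ‖x‖ ≤ 1} × ℝ => ‖z.1.1‖ :=
    hnormc.comp continuous_fst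
  set st2 : {x : EuclideanSpace ℝ (Fin n) // ‖x‖ ≤ 1} → ℝ → B :=
    fun x t => Kp (f (ρ x)) (1 - t * min 1 (2 - 2 * ‖x.1‖)) with hst2def
  have hst2c : Continuous fun z : {x : EuclideanSpace ℝ (Fin n) // ‖x‖ ≤ 1} × ℝ =>
      st2 z.1 z.2 := by
    rw [hst2def]
    exact hKpc.comp2 ((hf.comp hρc).comp continuous_fst)
      (by fun_prop)
  set st3 : {x : EuclideanSpace ℝ (Fin n) // ‖x‖ ≤ 1} → ℝ → B :=
    fun x t => if h : ‖x.1‖ ≤ 1/2 then α (β (f (ρ x)))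
      else Λ (φ ⟨(ρ x).1, hsph x (le_of_lt (not_le.mp h))⟩) (2 * ‖x.1‖ - 1) t with hst3def
  -- `st3` agrees with the Λ-expression on the outer annulus
  have hst3out : ∀ (x : {x : EuclideanSpace ℝ (Fin n) // ‖x‖ ≤ 1}) (hx : 1/2 ≤ ‖x.1‖) (t : ℝ),
      st3 x t = Λ (φ ⟨(ρ x).1, hsph x hx⟩) (2 * ‖x.1‖ - 1) t := by
    intro x hx t
    rw [hst3def]
    dsimp only
    by_cases h : ‖x.1‖ ≤ 1/2
    · rw [dif_pos h]
      have hieq : ‖x.1‖ = 1/2 := le_antisymm h hx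
      have h21 : 2 * ‖x.1‖ - 1 = 0 := by rw [hieq]; ring
      rw [h21, hΛl, ← hfρ x hx]
    · rw [dif_neg h]
  have hst3c : Continuous fun z : {x : EuclideanSpace ℝ (Fin n) // ‖x‖ ≤ 1} × ℝ =>
      st3 z.1 z.2 := by
    apply glue_closed (s := {z : {x : EuclideanSpace ℝ (Fin n) // ‖x‖ ≤ 1} × ℝ | ‖z.1.1‖ ≤ 1/2})
      (t := {z : {x : EuclideanSpace ℝ (Fin n) // ‖x‖ ≤ 1} × ℝ | 1/2 ≤ ‖z.1.1‖})
    · exact isClosed_le (hnormc.comp continuous_fst) continuous_const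
    · exact isClosed_le continuous_const (hnormc.comp continuous_fst)
    · intro z
      rcases le_total ‖z.1.1‖ (1/2) with h | h
      · exact Or.inl h
      · exact Or.inr h
    · refine ContinuousOn.congr
        (hα.comp (hβ.comp ((hf.comp hρc).comp continuous_fst))).continuousOn ?_
      intro z hz
      rw [hst3def]
      exact dif_pos hz
    · rw [continuousOn_iff_continuous_restrict]
      have hc : Continuous fun z : {z : {x : EuclideanSpace ℝ (Fin n) // ‖x‖ ≤ 1} × ℝ |
          1/2 ≤ ‖z.1.1‖} => Λ (φ ⟨(ρ z.1.1).1, hsph z.1.1 z.2⟩) (2 * ‖z.1.1.1‖ - 1) z.1.2 := by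
        apply hΛc.comp3 ?_ ?_ (by fun_prop)
        · apply hφ.comp
          apply Continuous.subtype_mk
          exact continuous_subtype_val.comp (hρc.comp (continuous_fst.comp
            continuous_subtype_val))
        · have : Continuous fun z : {z : {x : EuclideanSpace ℝ (Fin n) // ‖x‖ ≤ 1} × ℝ |
              1/2 ≤ ‖z.1.1‖} => ‖z.1.1.1‖ :=
            hnormc.comp (continuous_fst.comp continuous_subtype_val)
          fun_prop
      exact hc.congr (fun z => (hst3out z.1.1 z.2 z.1.2).symm)
  -- the seam equalities between the three stages
  have hseam1 : ∀ x, f (sq1 x 1) = st2 x 0 := by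
    intro x
    rw [hst2def]
    dsimp only
    rw [show (1:ℝ) - 0 * min 1 (2 - 2 * ‖x.1‖) = 1 by ring, hKp1, hsq11]
  have hseam2 : ∀ x, st2 x 1 = st3 x 0 := by
    intro x
    by_cases h : ‖x.1‖ ≤ 1/2
    · rw [hst2def, hst3def]
      dsimp only
      rw [min_eq_left (by linarith), show (1:ℝ) - 1 * 1 = 0 by ring, hKp0, dif_pos h]
    · push_neg at h
      rw [hst2def, hst3out x h.le 0, hΛ0, ← hfρ x h.le]
      dsimp only
      rw [min_eq_right (by linarith), show (1:ℝ) - 1 * (2 - 2 * ‖x.1‖) = 2 * ‖x.1‖ - 1 by ring]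
  -- the lift F
  set F : {x : EuclideanSpace ℝ (Fin n) // ‖x‖ ≤ 1} → A :=
    fun x => if h : ‖x.1‖ ≤ 1/2 then β (f (ρ x))
      else G (φ ⟨(ρ x).1, hsph x (le_of_lt (not_le.mp h))⟩,
        Set.projIcc 0 1 zero_le_one (2 * ‖x.1‖ - 1)) with hFdef
  have hp0 : Set.projIcc (0:ℝ) 1 zero_le_one 0 = 0 := by
    apply Subtype.ext
    simp [Set.projIcc]
  have hp1 : Set.projIcc (0:ℝ) 1 zero_le_one 1 = 1 := by
    apply Subtype.ext
    simp [Set.projIcc]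
  have hFout : ∀ (x : {x : EuclideanSpace ℝ (Fin n) // ‖x‖ ≤ 1}) (hx : 1/2 ≤ ‖x.1‖),
      F x = G (φ ⟨(ρ x).1, hsph x hx⟩, Set.projIcc 0 1 zero_le_one (2 * ‖x.1‖ - 1)) := by
    intro x hx
    rw [hFdef]
    dsimp only
    by_cases h : ‖x.1‖ ≤ 1/2
    · rw [dif_pos h]
      have hieq : ‖x.1‖ = 1/2 := le_antisymm h hx
      have h21 : 2 * ‖x.1‖ - 1 = 0 := by rw [hieq]; ring
      rw [h21, hp0, hG0, ← hfρ x hx]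
    · rw [dif_neg h]
  have hFc : Continuous F := by
    apply glue_closed (s := {x : {x : EuclideanSpace ℝ (Fin n) // ‖x‖ ≤ 1} | ‖x.1‖ ≤ 1/2})
      (t := {x : {x : EuclideanSpace ℝ (Fin n) // ‖x‖ ≤ 1} | 1/2 ≤ ‖x.1‖})
    · exact isClosed_le hnormc continuous_const
    · exact isClosed_le continuous_const hnormc
    · intro x
      rcases le_total ‖x.1‖ (1/2) with h | h
      · exact Or.inl h
      · exact Or.inr h
    · refine ContinuousOn.congr (hβ.comp (hf.comp hρc)).continuousOn ?_
      intro x hx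
      rw [hFdef]
      exact dif_pos hx
    · rw [continuousOn_iff_continuous_restrict]
      have hc : Continuous fun x : {x : {x : EuclideanSpace ℝ (Fin n) // ‖x‖ ≤ 1} |
          1/2 ≤ ‖x.1‖} => G (φ ⟨(ρ x.1).1, hsph x.1 x.2⟩,
            Set.projIcc 0 1 zero_le_one (2 * ‖x.1.1‖ - 1)) := by
        apply hGc.comp
        apply Continuous.prodMk
        · apply hφ.comp
          apply Continuous.subtype_mk
          exact continuous_subtype_val.comp (hρc.comp continuous_subtype_val)
        · apply continuous_projIcc.comp
          have : Continuous fun x : {x : {x : EuclideanSpace ℝ (Fin n) // ‖x‖ ≤ 1} |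
              1/2 ≤ ‖x.1‖} => ‖x.1.1‖ := hnormc.comp continuous_subtype_val
          fun_prop
      exact hc.congr (fun x => (hFout x.1 x.2).symm)
  have hst31 : ∀ x, st3 x 1 = α (F x) := by
    intro x
    rw [hst3def, hFdef]
    dsimp only
    by_cases h : ‖x.1‖ ≤ 1/2
    · rw [dif_pos h, dif_pos h]
    · rw [dif_neg h, dif_neg h, hΛ1]
  refine ⟨F, hFc, ?_, ?_⟩
  · -- F extends φ
    intro x
    have hy : ‖(⟨x.1, le_of_eq x.2⟩ : {x : EuclideanSpace ℝ (Fin n) // ‖x‖ ≤ 1}).1‖ = 1 := x.2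
    have hx12 : (1:ℝ)/2 ≤ ‖(⟨x.1, le_of_eq x.2⟩ :
        {x : EuclideanSpace ℝ (Fin n) // ‖x‖ ≤ 1}).1‖ := by rw [hy]; norm_num
    rw [hFout _ hx12]
    have h21 : 2 * ‖(⟨x.1, le_of_eq x.2⟩ :
        {x : EuclideanSpace ℝ (Fin n) // ‖x‖ ≤ 1}).1‖ - 1 = 1 := by rw [hy]; ring
    rw [h21, hp1, hG1]
    apply congrArg φ
    apply Subtype.ext
    show (ρ _).1 = x.1
    rw [hρ_eq _ hy]
  -- the homotopy H
  refine ⟨fun z => if (z.2 : ℝ) ≤ 1/3 then f (sq1 z.1 (3 * (z.2 : ℝ)))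
    else if (z.2 : ℝ) ≤ 2/3 then st2 z.1 (3 * (z.2 : ℝ) - 1)
    else st3 z.1 (3 * (z.2 : ℝ) - 2), ?_, ?_, ?_, ?_⟩
  · -- continuity of H
    have hcoe : Continuous fun z : {x : EuclideanSpace ℝ (Fin n) // ‖x‖ ≤ 1} × I =>
        (z.2 : ℝ) := continuous_subtype_val.comp continuous_snd
    have hb1 : Continuous fun z : {x : EuclideanSpace ℝ (Fin n) // ‖x‖ ≤ 1} × I =>
        f (sq1 z.1 (3 * (z.2 : ℝ))) :=
      famC.comp2 (p := fun x t => f (sq1 x t)) (hf.comp hsq1c) continuous_fst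
        (by fun_prop)
    have hb2 : Continuous fun z : {x : EuclideanSpace ℝ (Fin n) // ‖x‖ ≤ 1} × I =>
        st2 z.1 (3 * (z.2 : ℝ) - 1) :=
      famC.comp2 (p := st2) hst2c continuous_fst (by fun_prop)
    have hb3 : Continuous fun z : {x : EuclideanSpace ℝ (Fin n) // ‖x‖ ≤ 1} × I =>
        st3 z.1 (3 * (z.2 : ℝ) - 2) :=
      famC.comp2 (p := st3) hst3c continuous_fst (by fun_prop)
    apply Continuous.if_le hb1 ?_ hcoe continuous_const
    · intro z hz
      rw [hz, if_pos (show (1:ℝ)/3 ≤ 2/3 by norm_num),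
        show (3:ℝ) * (1/3) - 1 = 0 by norm_num, show (3:ℝ) * (1/3) = 1 by norm_num]
      exact hseam1 z.1
    · apply Continuous.if_le hb2 hb3 hcoe continuous_const
      intro z hz
      rw [hz, show (3:ℝ) * (2/3) - 1 = 1 by norm_num, show (3:ℝ) * (2/3) - 2 = 0 by norm_num]
      exact hseam2 z.1
  · -- H at time 0
    intro x
    have hc0 : (((0 : I)) : ℝ) = 0 := rfl
    simp only [hc0]
    rw [if_pos (show (0:ℝ) ≤ 1/3 by norm_num), show (3:ℝ) * 0 = 0 by ring, hsq10]
  · -- H at time 1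
    intro x
    have hc1 : (((1 : I)) : ℝ) = 1 := rfl
    simp only [hc1]
    rw [if_neg (show ¬ ((1:ℝ) ≤ 1/3) by norm_num), if_neg (show ¬ ((1:ℝ) ≤ 2/3) by norm_num),
      show (3:ℝ) * 1 - 2 = 1 by ring, hst31]
  · -- H is rel the boundary sphere
    intro x t
    have hy : ‖(⟨x.1, le_of_eq x.2⟩ : {x : EuclideanSpace ℝ (Fin n) // ‖x‖ ≤ 1}).1‖ = 1 := x.2
    have hx12 : (1:ℝ)/2 ≤ ‖(⟨x.1, le_of_eq x.2⟩ :
        {x : EuclideanSpace ℝ (Fin n) // ‖x‖ ≤ 1}).1‖ := by rw [hy]; norm_num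
    dsimp only
    by_cases h1 : (t : ℝ) ≤ 1/3
    · rw [if_pos h1, hsq1S _ hy]
    · rw [if_neg h1]
      by_cases h2 : (t : ℝ) ≤ 2/3
      · rw [if_pos h2, hst2def]
        dsimp only
        have hmin0 : min (1:ℝ) (2 - 2 * ‖(⟨x.1, le_of_eq x.2⟩ :
            {x : EuclideanSpace ℝ (Fin n) // ‖x‖ ≤ 1}).1‖) = 0 := by
          rw [hy]; norm_num
        rw [hmin0, show (1:ℝ) - (3 * (t:ℝ) - 1) * 0 = 1 by ring, hKp1, hρ_eq _ hy]
      · rw [if_neg h2, hst3out _ hx12]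
        have h21 : 2 * ‖(⟨x.1, le_of_eq x.2⟩ :
            {x : EuclideanSpace ℝ (Fin n) // ‖x‖ ≤ 1}).1‖ - 1 = 1 := by
          rw [hy]; ring
        rw [h21, hΛr]
        have : φ ⟨(ρ ⟨x.1, le_of_eq x.2⟩).1, hsph _ hx12⟩ = φ x := by
          apply congrArg φ
          apply Subtype.ext
          show (ρ _).1 = x.1
          rw [hρ_eq _ hy]
        rw [this, hlift x]
end StmtAux14
end
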